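/- arXiv:1408.3463 — 7 statements merged into one kernel-verified Lean document; each statement's English description precedes it below -/
import Mathlib

section
/- Let {u_θ}_{θ∈Θ} be vectors in a finite-dimensional Hilbert space H and {v_θ}_{θ∈Θ} a linearly independent family in a finite-dimensional Hilbert space K. If there exists a completely positive unital map Λ : L(H) → L(K) with Λ(|u_θ⟩⟨u_θ|) = |v_θ⟩⟨v_θ| for all θ, then the family {u_θ} is also linearly independent. -/
open Matrix Finset
open scoped ComplexOrder

noncomputable section

/-- The rank-one operator `|u⟩⟨u|` as a matrix: `(outer u) i j = u i * conj (u j)`. -/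
def outer {n : ℕ} (u : Fin n → ℂ) : Matrix (Fin n) (Fin n) ℂ :=
  Matrix.vecMulVec u (star u)

/-- A linear map on matrices is completely positive iff it admits a Kraus representation. -/
def IsCPMap {n m : ℕ}
    (Λ : Matrix (Fin n) (Fin n) ℂ →ₗ[ℂ] Matrix (Fin m) (Fin m) ℂ) : Prop :=
  ∃ (k : ℕ) (W : Fin k → Matrix (Fin m) (Fin n) ℂ),
    ∀ X, Λ X = ∑ i, W i * X * (W i)ᴴ

/-- `Λ` is unital: `Λ(I) = I`. -/
def IsUnital {n m : ℕ}
    (Λ : Matrix (Fin n) (Fin n) ℂ →ₗ[ℂ] Matrix (Fin m) (Fin m) ℂ) : Prop :=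
  Λ 1 = 1

/-- `Λ` is subunital: `Λ(I) ≤ I` in the Loewner order. -/
def IsSubunital {n m : ℕ}
    (Λ : Matrix (Fin n) (Fin n) ℂ →ₗ[ℂ] Matrix (Fin m) (Fin m) ℂ) : Prop :=
  ((1 : Matrix (Fin m) (Fin m) ℂ) - Λ 1).PosSemidef

/-- Gram matrix of a family of vectors. -/
def gram {Θ : Type*} {n : ℕ} (u : Θ → (Fin n → ℂ)) : Matrix Θ Θ ℂ :=
  Matrix.of fun θ θ' => star (u θ) ⬝ᵥ u θ'

/-- Largest real eigenvalue of a matrix (intended for Hermitian matrices). -/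
def lamMax {n : ℕ} (A : Matrix (Fin n) (Fin n) ℂ) : ℝ :=
  sSup {r : ℝ | ∃ x : Fin n → ℂ, x ≠ 0 ∧ A.mulVec x = (r : ℂ) • x}

/-- Smallest real eigenvalue of a matrix (intended for Hermitian matrices). -/
def lamMin {n : ℕ} (A : Matrix (Fin n) (Fin n) ℂ) : ℝ :=
  sInf {r : ℝ | ∃ x : Fin n → ℂ, x ≠ 0 ∧ A.mulVec x = (r : ℂ) • x}

/-- Operator (spectral) norm of a matrix. -/
def opNorm {n : ℕ} (A : Matrix (Fin n) (Fin n) ℂ) : ℝ :=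
  ‖Matrix.toEuclideanCLM (𝕜 := ℂ) A‖

lemma sum_mulVec' {k n m : ℕ} (M : Fin k → Matrix (Fin m) (Fin n) ℂ) (x : Fin n → ℂ) :
    (∑ i, M i) *ᵥ x = ∑ i, M i *ᵥ x := by
  ext j
  simp only [mulVec, dotProduct, Finset.sum_apply, Matrix.sum_apply, Finset.sum_mul]
  rw [Finset.sum_comm]

lemma dotProduct_sum' {k n : ℕ} (x : Fin n → ℂ) (y : Fin k → (Fin n → ℂ)) :
    x ⬝ᵥ (∑ i, y i) = ∑ i, x ⬝ᵥ y i := by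
  simp only [dotProduct, Finset.sum_apply, Finset.mul_sum]
  exact Finset.sum_comm

lemma outer_conj {n m : ℕ} (A : Matrix (Fin m) (Fin n) ℂ) (u : Fin n → ℂ) :
    A * outer u * Aᴴ = outer (A *ᵥ u) := by
  rw [outer, outer, vecMulVec_eq (Fin 1), vecMulVec_eq (Fin 1)]
  simp only [Matrix.mul_assoc]
  rw [← Matrix.mul_assoc A, ← replicateCol_mulVec, ← replicateRow_vecMul, star_mulVec]

lemma outer_mulVec {n : ℕ} (u x : Fin n → ℂ) :
    outer u *ᵥ x = (star u ⬝ᵥ x) • u := by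
  ext i
  simp [outer, mulVec, dotProduct, vecMulVec_apply, Finset.mul_sum, mul_comm, mul_left_comm]

lemma quad_outer {n : ℕ} (u x : Fin n → ℂ) :
    star x ⬝ᵥ (outer u *ᵥ x) = (Complex.normSq (star u ⬝ᵥ x) : ℂ) := by
  rw [outer_mulVec, dotProduct_smul]
  have : star x ⬝ᵥ u = star (star u ⬝ᵥ x) := by
    simp [dotProduct, mul_comm]
  rw [this]
  simp [Complex.normSq_eq_conj_mul_self, mul_comm]

/-- If a sum of rank-one outers equals a rank-one outer, each vector lies in the span. -/
lemma outer_sum_span {k m : ℕ} (w : Fin k → (Fin m → ℂ)) (v : Fin m → ℂ) (hv : v ≠ 0)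
    (h : ∑ i, outer (w i) = outer v) (i : Fin k) :
    ∃ α : ℂ, w i = α • v := by
  have hvv : star v ⬝ᵥ v ≠ 0 := fun h0 => hv (dotProduct_star_self_eq_zero.mp h0)
  set a : ℂ := (star v ⬝ᵥ w i) / (star v ⬝ᵥ v) with ha
  set x : Fin m → ℂ := w i - a • v with hx
  have hvx : star v ⬝ᵥ x = 0 := by
    simp only [hx, dotProduct_sub, dotProduct_smul, smul_eq_mul, ha]
    field_simp
    ring
  have hq : ∑ j, (Complex.normSq (star (w j) ⬝ᵥ x) : ℂ) = (Complex.normSq (star v ⬝ᵥ x) : ℂ) := by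
    have h2 := congrArg (fun M => star x ⬝ᵥ (M *ᵥ x)) h
    simp only [sum_mulVec', dotProduct_sum', quad_outer] at h2
    exact h2
  rw [hvx] at hq
  have hq' : ∑ j, Complex.normSq (star (w j) ⬝ᵥ x) = 0 := by
    have := hq
    rw [Complex.normSq_zero] at this
    exact_mod_cast this
  have hwx : star (w i) ⬝ᵥ x = 0 := by
    have := (Finset.sum_eq_zero_iff_of_nonneg (fun j _ => Complex.normSq_nonneg _)).mp hq' i
      (Finset.mem_univ i)
    exact Complex.normSq_eq_zero.mp this
  have hstar : star x = star (w i) - star a • star v := by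
    rw [hx]; simp
  have hxx : star x ⬝ᵥ x = 0 := by
    rw [hstar, sub_dotProduct, hwx, smul_dotProduct, smul_eq_mul, hvx, mul_zero, sub_zero]
  have hx0 : x = 0 := dotProduct_star_self_eq_zero.mp hxx
  exact ⟨a, by rw [← sub_eq_zero]; exact hx0⟩


theorem stmt1 {Θ : Type*} [Fintype Θ] {n m : ℕ}
    (u : Θ → (Fin n → ℂ)) (v : Θ → (Fin m → ℂ))
    (hv : LinearIndependent ℂ v)
    (Λ : Matrix (Fin n) (Fin n) ℂ →ₗ[ℂ] Matrix (Fin m) (Fin m) ℂ)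
    (hCP : IsCPMap Λ) (hUnital : IsUnital Λ)
    (hconv : ∀ θ, Λ (outer (u θ)) = outer (v θ)) :
    LinearIndependent ℂ u := by
  obtain ⟨k, W, hW⟩ := hCP
  have key : ∀ θ, ∑ i, outer (W i *ᵥ u θ) = outer (v θ) := by
    intro θ
    rw [← hconv θ, hW]
    exact Finset.sum_congr rfl fun i _ => (outer_conj (W i) (u θ)).symm
  have hvne : ∀ θ, v θ ≠ 0 := fun θ => hv.ne_zero θ
  have hspan : ∀ θ i, ∃ α : ℂ, W i *ᵥ u θ = α • v θ := fun θ i =>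
    outer_sum_span (fun i => W i *ᵥ u θ) (v θ) (hvne θ) (key θ) i
  choose α hα using hspan
  rw [Fintype.linearIndependent_iff]
  intro c hc θ0
  by_contra hc0
  have hci : ∀ i θ, c θ * α θ i = 0 := by
    intro i
    refine Fintype.linearIndependent_iff.mp hv (fun θ => c θ * α θ i) ?_
    have h0 : W i *ᵥ (∑ θ, c θ • u θ) = 0 := by rw [hc, mulVec_zero]
    calc ∑ θ, (c θ * α θ i) • v θ = ∑ θ, c θ • (W i *ᵥ u θ) := by
          simp [hα, smul_smul]
      _ = W i *ᵥ (∑ θ, c θ • u θ) := by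
          ext j
          simp only [mulVec, Finset.sum_apply, Pi.smul_apply, smul_eq_mul]
          rw [show (∑ θ, c θ • u θ) = fun p => ∑ θ, c θ * u θ p by
            ext p; simp [Finset.sum_apply]]
          simp only [dotProduct, Finset.mul_sum]
          rw [Finset.sum_comm]
          congr 1; ext θ; congr 1; ext p; ring
      _ = 0 := h0
  have hα0 : ∀ i, α θ0 i = 0 := fun i =>
    (mul_eq_zero.mp (hci i θ0)).resolve_left hc0
  have hzero : outer (v θ0) = 0 := by
    rw [← key θ0]
    refine Finset.sum_eq_zero fun i _ => ?_
    rw [hα θ0 i, hα0 i, zero_smul]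
    ext a b; simp [outer, vecMulVec_apply]
  obtain ⟨j, hj⟩ := Function.ne_iff.mp (hvne θ0)
  have hjj : v θ0 j * star (v θ0 j) = 0 := by
    have := congrFun (congrFun hzero j) j
    simpa [outer, vecMulVec_apply] using this
  rcases mul_eq_zero.mp hjj with h | h
  · exact hj (by simpa using h)
  · exact hj (by simpa using star_eq_zero.mp h)
end
end

section
/- Let {u_θ}_{θ∈Θ} and {v_θ}_{θ∈Θ} be linearly independent families spanning H and K respectively, with Gram matrices G_U and G_V. There exists a completely positive subunital map Λ : L(H) → L(K) with Λ(|u_θ⟩⟨u_θ|) = |v_θ⟩⟨v_θ| for all θ if and only if there exists a positive semidefinite matrix H = [H_{θθ'}] with H_{θθ} = 1 for all θ such that G_V^{-1} ≥ H ∘ G_U^{-1}, where ∘ is the Hadamard (entrywise) product and ≥ is the Loewner order. -/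
open Matrix Finset
open scoped ComplexOrder

noncomputable section

set_option linter.unusedSectionVars false

namespace Stmt3Aux

variable {Θ : Type*} [Fintype Θ] [DecidableEq Θ] {n m : ℕ}

/-- Matrix with columns `u θ`. -/
def mOf (u : Θ → (Fin n → ℂ)) : Matrix (Fin n) Θ ℂ := Matrix.of fun i θ => u θ i

lemma gram_eq (u : Θ → Fin n → ℂ) : gram u = (mOf u)ᴴ * mOf u := by
  ext θ σ
  simp [_root_.gram, mOf, Matrix.mul_apply, Matrix.conjTranspose_apply, dotProduct]

lemma gram_herm (u : Θ → Fin n → ℂ) : (gram u)ᴴ = gram u := by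
  rw [gram_eq]; exact (Matrix.isHermitian_conjTranspose_mul_self _)

lemma mulVec_mOf (u : Θ → Fin n → ℂ) (c : Θ → ℂ) :
    (mOf u) *ᵥ c = ∑ θ, c θ • u θ := by
  ext i
  simp [mOf, Matrix.mulVec, dotProduct, mul_comm]

lemma mul_mOf_apply (W : Matrix (Fin m) (Fin n) ℂ) (u : Θ → Fin n → ℂ) (j : Fin m) (θ : Θ) :
    (W * mOf u) j θ = (W *ᵥ u θ) j := by
  simp [mOf, Matrix.mul_apply, Matrix.mulVec, dotProduct]

lemma isUnit_gram_det (u : Θ → Fin n → ℂ) (hu : LinearIndependent ℂ u) :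
    IsUnit (gram u).det := by
  rw [← Matrix.isUnit_iff_isUnit_det, ← Matrix.mulVec_injective_iff_isUnit]
  have key : ∀ c : Θ → ℂ, (gram u) *ᵥ c = 0 → c = 0 := by
    intro c hc
    have h1 : star c ⬝ᵥ ((gram u) *ᵥ c) = 0 := by rw [hc, dotProduct_zero]
    rw [gram_eq, ← Matrix.mulVec_mulVec, Matrix.dotProduct_mulVec, ← Matrix.star_mulVec,
      dotProduct_star_self_eq_zero] at h1
    rw [mulVec_mOf] at h1
    exact funext (Fintype.linearIndependent_iff.mp hu c h1)
  intro a b hab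
  have : (gram u) *ᵥ (a - b) = 0 := by
    rw [Matrix.mulVec_sub, hab, sub_self]
  have := key _ this
  exact sub_eq_zero.mp this

lemma inv_mul_gram (u : Θ → Fin n → ℂ) (hu : LinearIndependent ℂ u) :
    (gram u)⁻¹ * gram u = 1 := Matrix.nonsing_inv_mul _ (isUnit_gram_det u hu)

lemma gram_mul_inv (u : Θ → Fin n → ℂ) (hu : LinearIndependent ℂ u) :
    gram u * (gram u)⁻¹ = 1 := Matrix.mul_nonsing_inv _ (isUnit_gram_det u hu)

lemma gram_inv_herm (u : Θ → Fin n → ℂ) : ((gram u)⁻¹)ᴴ = (gram u)⁻¹ := by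
  rw [Matrix.conjTranspose_nonsing_inv, gram_herm]

lemma ext_mulVec {A B : Matrix (Fin n) (Fin n) ℂ} (h : ∀ x, A *ᵥ x = B *ᵥ x) : A = B := by
  ext i j
  have := congr_fun (h (Pi.single j 1)) i
  simpa [Matrix.mulVec_single] using this

lemma mOf_mul_inv (u : Θ → Fin n → ℂ) (hu : LinearIndependent ℂ u)
    (hus : Submodule.span ℂ (Set.range u) = ⊤) :
    mOf u * ((gram u)⁻¹ * (mOf u)ᴴ) = 1 := by
  apply ext_mulVec
  intro x
  obtain ⟨c, hc⟩ : ∃ c : Θ → ℂ, ∑ θ, c θ • u θ = x := by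
    have hx : x ∈ Submodule.span ℂ (Set.range u) := hus ▸ Submodule.mem_top
    exact (Submodule.mem_span_range_iff_exists_fun ℂ).mp hx
  have hxc : (mOf u) *ᵥ c = x := by rw [mulVec_mOf, hc]
  rw [← hxc, Matrix.mulVec_mulVec, Matrix.mulVec_mulVec, Matrix.one_mul, Matrix.mul_assoc,
    Matrix.mul_assoc ((gram u)⁻¹), ← gram_eq, inv_mul_gram u hu, Matrix.mul_one]

lemma mul_outer_mul (W : Matrix (Fin m) (Fin n) ℂ) (a : Fin n → ℂ) :
    W * outer a * Wᴴ = outer (W *ᵥ a) := by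
  ext i j
  simp only [outer, Matrix.mul_apply, Matrix.vecMulVec_apply, Matrix.conjTranspose_apply,
    Pi.star_apply, Matrix.mulVec, dotProduct, star_sum, star_mul']
  rw [Finset.sum_mul_sum]
  simp_rw [Finset.sum_mul]
  rw [Finset.sum_comm]
  refine Finset.sum_congr rfl fun q _ => Finset.sum_congr rfl fun p _ => by ring

lemma outer_smul (c : ℂ) (v : Fin m → ℂ) : outer (c • v) = (c * star c) • outer v := by
  ext i j
  simp only [outer, Matrix.vecMulVec_apply, Pi.smul_apply, Pi.star_apply, smul_eq_mul,
    Matrix.smul_apply, star_mul']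
  ring

lemma outer_mulVec (v x : Fin m → ℂ) : outer v *ᵥ x = (star v ⬝ᵥ x) • v := by
  ext i
  simp only [outer, Matrix.mulVec, Matrix.vecMulVec_apply, dotProduct, Pi.smul_apply,
    Pi.star_apply, smul_eq_mul, Finset.sum_mul, Finset.mul_sum]
  exact Finset.sum_congr rfl fun q _ => by ring

lemma outer_zero : outer (0 : Fin m → ℂ) = 0 := by
  ext i j; simp [outer, Matrix.vecMulVec_apply]

/-- Key rank-one decomposition lemma. -/
lemma exists_coeff {k : ℕ} (x : Fin k → Fin m → ℂ) (v : Fin m → ℂ) (hv : v ≠ 0)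
    (h : ∑ i, outer (x i) = outer v) :
    ∃ c : Fin k → ℂ, (∀ i, x i = c i • v) ∧ ∑ i, c i * star (c i) = 1 := by
  set t : ℂ := star v ⬝ᵥ v with ht_def
  have ht : t ≠ 0 := fun h0 => hv (dotProduct_star_self_eq_zero.mp h0)
  set Q : Matrix (Fin m) (Fin m) ℂ := 1 - t⁻¹ • outer v with hQ_def
  have hQv : Q *ᵥ v = 0 := by
    rw [hQ_def, Matrix.sub_mulVec, Matrix.one_mulVec, Matrix.smul_mulVec, outer_mulVec,
      ← ht_def, smul_smul, inv_mul_cancel₀ ht, one_smul, sub_self]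
  have hQx : ∀ x', Q *ᵥ x' = x' - (t⁻¹ * (star v ⬝ᵥ x')) • v := by
    intro x'
    rw [hQ_def, Matrix.sub_mulVec, Matrix.one_mulVec, Matrix.smul_mulVec, outer_mulVec,
      smul_smul]
  have key : ∑ i, outer (Q *ᵥ x i) = 0 := by
    have h2 := congrArg (fun M => Q * M * Qᴴ) h
    simp only [Finset.sum_mul, Finset.mul_sum] at h2
    simp_rw [mul_outer_mul] at h2
    rw [h2, hQv, outer_zero]
  have hQxi : ∀ i, Q *ᵥ x i = 0 := by
    intro i
    ext j
    have hjj := congr_fun (congr_fun key j) j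
    simp only [Matrix.sum_apply, Matrix.zero_apply, outer, Matrix.vecMulVec_apply,
      Pi.star_apply] at hjj
    have hjj' : ∑ i', (Complex.normSq ((Q *ᵥ x i') j) : ℂ) = 0 := by
      rw [← hjj]
      exact Finset.sum_congr rfl fun i' _ => (Complex.mul_conj _).symm
    rw [← Complex.ofReal_sum, Complex.ofReal_eq_zero] at hjj'
    have hnn : ∀ i' ∈ Finset.univ, (0:ℝ) ≤ Complex.normSq ((Q *ᵥ x i') j) :=
      fun i' _ => Complex.normSq_nonneg _
    have := (Finset.sum_eq_zero_iff_of_nonneg hnn).mp hjj' i (Finset.mem_univ i)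
    exact Complex.normSq_eq_zero.mp this
  set c : Fin k → ℂ := fun i => t⁻¹ * (star v ⬝ᵥ x i) with hc_def
  have hxc : ∀ i, x i = c i • v := by
    intro i
    have h0 := hQxi i
    rw [hQx (x i)] at h0
    exact (sub_eq_zero.mp h0)
  refine ⟨c, hxc, ?_⟩
  have hsum : (∑ i, c i * star (c i)) • outer v = outer v := by
    calc (∑ i, c i * star (c i)) • outer v
        = ∑ i, (c i * star (c i)) • outer v := Finset.sum_smul
      _ = ∑ i, outer (c i • v) := by simp_rw [outer_smul]
      _ = ∑ i, outer (x i) := by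
          refine Finset.sum_congr rfl fun i _ => by rw [← hxc i]
      _ = outer v := h
  obtain ⟨j, hj⟩ := Function.ne_iff.mp hv
  have hjj := congr_fun (congr_fun hsum j) j
  simp only [Matrix.smul_apply, smul_eq_mul] at hjj
  have hne : outer v j j ≠ 0 := by
    simp only [outer, Matrix.vecMulVec_apply, Pi.star_apply]
    exact mul_ne_zero hj (star_ne_zero.mpr hj)
  have hjj' : (∑ i, c i * star (c i)) * (outer v j j) = 1 * (outer v j j) := by
    rw [one_mul]; exact hjj
  exact mul_right_cancel₀ hne hjj'


lemma sum_diag_conj {k : ℕ} (A : Matrix Θ Θ ℂ) (c : Fin k → Θ → ℂ) :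
    ∑ i, diagonal (c i) * A * (diagonal (c i))ᴴ
      = Matrix.hadamard (Matrix.of fun θ σ => ∑ i, c i θ * star (c i σ)) A := by
  ext θ σ
  simp only [Matrix.sum_apply, Matrix.diagonal_conjTranspose, Matrix.mul_diagonal,
    Matrix.diagonal_mul, Matrix.hadamard_apply, Matrix.of_apply, Pi.star_apply, Finset.sum_mul]
  exact Finset.sum_congr rfl fun i _ => by ring

/-- The key Kraus-sum computation. -/
lemma sum_kraus {k : ℕ} (v : Θ → Fin m → ℂ) (u : Θ → Fin n → ℂ)
    (hu : LinearIndependent ℂ u) (c : Fin k → Θ → ℂ) :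
    ∑ i, (mOf v * diagonal (c i) * ((gram u)⁻¹ * (mOf u)ᴴ)) *
        (mOf v * diagonal (c i) * ((gram u)⁻¹ * (mOf u)ᴴ))ᴴ
      = mOf v * Matrix.hadamard (Matrix.of fun θ σ => ∑ i, c i θ * star (c i σ)) (gram u)⁻¹
          * (mOf v)ᴴ := by
  have hterm : ∀ i : Fin k,
      (mOf v * diagonal (c i) * ((gram u)⁻¹ * (mOf u)ᴴ)) *
        (mOf v * diagonal (c i) * ((gram u)⁻¹ * (mOf u)ᴴ))ᴴ
      = mOf v * (diagonal (c i) * (gram u)⁻¹ * (diagonal (c i))ᴴ) * (mOf v)ᴴ := by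
    intro i
    have hBB : ((gram u)⁻¹ * (mOf u)ᴴ) * ((gram u)⁻¹ * (mOf u)ᴴ)ᴴ = (gram u)⁻¹ := by
      rw [Matrix.conjTranspose_mul, Matrix.conjTranspose_conjTranspose,
        Matrix.conjTranspose_nonsing_inv, gram_herm, Matrix.mul_assoc,
        ← Matrix.mul_assoc ((mOf u)ᴴ), ← gram_eq, ← Matrix.mul_assoc,
        Matrix.mul_assoc ((gram u)⁻¹), ← Matrix.mul_assoc, inv_mul_gram u hu, Matrix.one_mul]
    rw [Matrix.conjTranspose_mul, ← Matrix.mul_assoc,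
      Matrix.mul_assoc (mOf v * diagonal (c i)), hBB, Matrix.conjTranspose_mul]
    simp only [Matrix.mul_assoc]
  calc ∑ i, (mOf v * diagonal (c i) * ((gram u)⁻¹ * (mOf u)ᴴ)) *
        (mOf v * diagonal (c i) * ((gram u)⁻¹ * (mOf u)ᴴ))ᴴ
      = ∑ i, mOf v * (diagonal (c i) * (gram u)⁻¹ * (diagonal (c i))ᴴ) * (mOf v)ᴴ :=
        Finset.sum_congr rfl fun i _ => hterm i
    _ = mOf v * (∑ i, diagonal (c i) * (gram u)⁻¹ * (diagonal (c i))ᴴ) * (mOf v)ᴴ := by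
        rw [Matrix.mul_sum, Matrix.sum_mul]
    _ = _ := by rw [sum_diag_conj]

lemma mul_mOf_eq_iff (W : Matrix (Fin m) (Fin n) ℂ) (u : Θ → Fin n → ℂ)
    (v : Θ → Fin m → ℂ) (d : Θ → ℂ) :
    W * mOf u = mOf v * diagonal d ↔ ∀ θ, W *ᵥ u θ = d θ • v θ := by
  constructor
  · intro h θ
    ext j
    have := congr_fun (congr_fun h j) θ
    rw [mul_mOf_apply] at this
    simpa [mOf, Matrix.mul_diagonal, mul_comm] using this
  · intro h
    ext j θ
    rw [mul_mOf_apply, h θ]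
    simp [mOf, Matrix.mul_diagonal, mul_comm]


lemma cancel_left {p : Type*} [Fintype p] (v : Θ → Fin m → ℂ) (hv : LinearIndependent ℂ v)
    (X : Matrix Θ p ℂ) : (gram v)⁻¹ * ((mOf v)ᴴ * (mOf v * X)) = X := by
  rw [← Matrix.mul_assoc (mOf v)ᴴ, ← gram_eq, ← Matrix.mul_assoc, inv_mul_gram v hv,
    Matrix.one_mul]

lemma conjT_mul_mul_inv (v : Θ → Fin m → ℂ) (hv : LinearIndependent ℂ v) :
    (mOf v)ᴴ * (mOf v * (gram v)⁻¹) = 1 := by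
  rw [← Matrix.mul_assoc, ← gram_eq, gram_mul_inv v hv]

lemma inv_conjT_mul (u : Θ → Fin n → ℂ) (hu : LinearIndependent ℂ u) :
    ((gram u)⁻¹ * (mOf u)ᴴ) * mOf u = 1 := by
  rw [Matrix.mul_assoc, ← gram_eq, inv_mul_gram u hu]

lemma loewner_of_subunital (v : Θ → Fin m → ℂ) (hv : LinearIndependent ℂ v)
    (M : Matrix Θ Θ ℂ)
    (hsub : ((1 : Matrix (Fin m) (Fin m) ℂ) - mOf v * M * (mOf v)ᴴ).PosSemidef) :
    ((gram v)⁻¹ - M).PosSemidef := by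
  have key : (gram v)⁻¹ - M
      = (mOf v * (gram v)⁻¹)ᴴ * ((1 : Matrix (Fin m) (Fin m) ℂ) - mOf v * M * (mOf v)ᴴ)
          * (mOf v * (gram v)⁻¹) := by
    rw [Matrix.conjTranspose_mul, gram_inv_herm, Matrix.mul_sub, Matrix.mul_one, Matrix.sub_mul]
    congr 1
    · rw [Matrix.mul_assoc, cancel_left v hv]
    · simp only [Matrix.mul_assoc]
      rw [conjT_mul_mul_inv v hv, Matrix.mul_one, cancel_left v hv]
  rw [key]
  exact hsub.conjTranspose_mul_mul_same _

lemma subunital_of_loewner (v : Θ → Fin m → ℂ) (hv : LinearIndependent ℂ v)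
    (hvs : Submodule.span ℂ (Set.range v) = ⊤) (M : Matrix Θ Θ ℂ)
    (h : ((gram v)⁻¹ - M).PosSemidef) :
    ((1 : Matrix (Fin m) (Fin m) ℂ) - mOf v * M * (mOf v)ᴴ).PosSemidef := by
  have key : (1 : Matrix (Fin m) (Fin m) ℂ) - mOf v * M * (mOf v)ᴴ
      = mOf v * ((gram v)⁻¹ - M) * (mOf v)ᴴ := by
    rw [Matrix.mul_sub, Matrix.sub_mul]
    congr 1
    rw [Matrix.mul_assoc, mOf_mul_inv v hv hvs]
  rw [key]
  exact h.mul_mul_conjTranspose_same _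

end Stmt3Aux

theorem stmt3 {Θ : Type*} [Fintype Θ] [DecidableEq Θ] {n m : ℕ}
    (u : Θ → (Fin n → ℂ)) (v : Θ → (Fin m → ℂ))
    (hu : LinearIndependent ℂ u) (hv : LinearIndependent ℂ v)
    (hus : Submodule.span ℂ (Set.range u) = ⊤)
    (hvs : Submodule.span ℂ (Set.range v) = ⊤) :
    (∃ Λ : Matrix (Fin n) (Fin n) ℂ →ₗ[ℂ] Matrix (Fin m) (Fin m) ℂ,
        IsCPMap Λ ∧ IsSubunital Λ ∧ ∀ θ, Λ (outer (u θ)) = outer (v θ)) ↔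
      ∃ H : Matrix Θ Θ ℂ, H.PosSemidef ∧ (∀ θ, H θ θ = 1) ∧
        ((gram v)⁻¹ - Matrix.hadamard H (gram u)⁻¹).PosSemidef := by
  classical
  constructor
  · rintro ⟨Λ, ⟨k, W, hW⟩, hsub, hmap⟩
    have hθ : ∀ θ, ∑ i, outer (W i *ᵥ u θ) = outer (v θ) := by
      intro θ
      have h1 := hmap θ
      rw [hW] at h1
      simp_rw [Stmt3Aux.mul_outer_mul] at h1
      exact h1
    choose c hc1 hc2 using fun θ =>
      Stmt3Aux.exists_coeff (fun i => W i *ᵥ u θ) (v θ) (hv.ne_zero θ) (hθ θ)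
    set cc : Fin k → Θ → ℂ := fun i θ => c θ i with hcc
    refine ⟨Matrix.of fun θ σ => ∑ i, cc i θ * star (cc i σ), ?_, ?_, ?_⟩
    · have hfac : (Matrix.of fun θ σ => ∑ i, cc i θ * star (cc i σ))
          = (Matrix.of fun (i : Fin k) θ => star (cc i θ))ᴴ
              * (Matrix.of fun (i : Fin k) θ => star (cc i θ)) := by
        ext θ σ
        simp [Matrix.mul_apply, Matrix.conjTranspose_apply]
      rw [hfac]
      exact Matrix.posSemidef_conjTranspose_mul_self _
    · intro θ
      simpa using hc2 θ
    · have hWi : ∀ i, W i = Stmt3Aux.mOf v * diagonal (cc i)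
          * ((gram u)⁻¹ * (Stmt3Aux.mOf u)ᴴ) := by
        intro i
        have hWU : W i * Stmt3Aux.mOf u = Stmt3Aux.mOf v * diagonal (cc i) := by
          rw [Stmt3Aux.mul_mOf_eq_iff]
          intro θ
          exact hc1 θ i
        calc W i = W i * 1 := (Matrix.mul_one _).symm
          _ = W i * (Stmt3Aux.mOf u * ((gram u)⁻¹ * (Stmt3Aux.mOf u)ᴴ)) := by
              rw [Stmt3Aux.mOf_mul_inv u hu hus]
          _ = (W i * Stmt3Aux.mOf u) * ((gram u)⁻¹ * (Stmt3Aux.mOf u)ᴴ) := by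
              rw [Matrix.mul_assoc]
          _ = _ := by rw [hWU]
      have hΛ1 : Λ 1 = Stmt3Aux.mOf v
          * Matrix.hadamard (Matrix.of fun θ σ => ∑ i, cc i θ * star (cc i σ)) (gram u)⁻¹
          * (Stmt3Aux.mOf v)ᴴ := by
        rw [hW 1]
        rw [show (∑ i, W i * (1 : Matrix (Fin n) (Fin n) ℂ) * (W i)ᴴ)
            = ∑ i, (Stmt3Aux.mOf v * diagonal (cc i) * ((gram u)⁻¹ * (Stmt3Aux.mOf u)ᴴ))
              * (Stmt3Aux.mOf v * diagonal (cc i) * ((gram u)⁻¹ * (Stmt3Aux.mOf u)ᴴ))ᴴ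
          from Finset.sum_congr rfl fun i _ => by rw [Matrix.mul_one, hWi i]]
        exact Stmt3Aux.sum_kraus v u hu cc
      apply Stmt3Aux.loewner_of_subunital v hv
      rw [← hΛ1]
      exact hsub
  · rintro ⟨H, hH, hdiag, hLoew⟩
    obtain ⟨C, hC⟩ : ∃ C : Matrix Θ Θ ℂ, H = Cᴴ * C := by
      open scoped MatrixOrder in exact CStarAlgebra.nonneg_iff_eq_star_mul_self.mp hH.nonneg
    set e : Fin (Fintype.card Θ) ≃ Θ := (Fintype.equivFin Θ).symm with he
    set cc : Fin (Fintype.card Θ) → Θ → ℂ := fun i θ => star (C (e i) θ) with hcc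
    have hHcc : (Matrix.of fun θ σ => ∑ i, cc i θ * star (cc i σ)) = H := by
      ext θ σ
      rw [hC]
      simp only [Matrix.mul_apply, Matrix.conjTranspose_apply, Matrix.of_apply, hcc, star_star]
      exact Fintype.sum_equiv e _ _ (fun i => rfl)
    set W : Fin (Fintype.card Θ) → Matrix (Fin m) (Fin n) ℂ :=
      fun i => Stmt3Aux.mOf v * diagonal (cc i) * ((gram u)⁻¹ * (Stmt3Aux.mOf u)ᴴ) with hWdef
    have hWu : ∀ i θ, W i *ᵥ u θ = cc i θ • v θ := by
      intro i
      rw [← Stmt3Aux.mul_mOf_eq_iff]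
      rw [hWdef, Matrix.mul_assoc (Stmt3Aux.mOf v * diagonal (cc i)),
        Stmt3Aux.inv_conjT_mul u hu, Matrix.mul_one]
    refine ⟨{ toFun := fun X => ∑ i, W i * X * (W i)ᴴ,
              map_add' := ?_, map_smul' := ?_ }, ⟨_, W, fun X => rfl⟩, ?_, ?_⟩
    · intro X Y
      show (∑ i, W i * (X + Y) * (W i)ᴴ)
          = (∑ i, W i * X * (W i)ᴴ) + (∑ i, W i * Y * (W i)ᴴ)
      rw [← Finset.sum_add_distrib]
      exact Finset.sum_congr rfl fun i _ => by rw [Matrix.mul_add, Matrix.add_mul]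
    · intro r X
      show (∑ i, W i * (r • X) * (W i)ᴴ) = (RingHom.id ℂ) r • ∑ i, W i * X * (W i)ᴴ
      rw [RingHom.id_apply, Finset.smul_sum]
      exact Finset.sum_congr rfl fun i _ => by rw [Matrix.mul_smul, Matrix.smul_mul]
    · show ((1 : Matrix (Fin m) (Fin m) ℂ) - ∑ i, W i * (1 : Matrix (Fin n) (Fin n) ℂ) * (W i)ᴴ).PosSemidef
      have h1 : (∑ i, W i * (1 : Matrix (Fin n) (Fin n) ℂ) * (W i)ᴴ) = Stmt3Aux.mOf v
          * Matrix.hadamard H (gram u)⁻¹ * (Stmt3Aux.mOf v)ᴴ := by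
        rw [show (∑ i, W i * (1 : Matrix (Fin n) (Fin n) ℂ) * (W i)ᴴ) = ∑ i, W i * (W i)ᴴ
          from Finset.sum_congr rfl fun i _ => by rw [Matrix.mul_one]]
        rw [hWdef, Stmt3Aux.sum_kraus v u hu cc, hHcc]
      rw [h1]
      exact Stmt3Aux.subunital_of_loewner v hv hvs _ hLoew
    · intro θ
      show ∑ i, W i * outer (u θ) * (W i)ᴴ = outer (v θ)
      have hdd : ∑ i, cc i θ * star (cc i θ) = 1 := by
        have h2 := congr_fun (congr_fun hHcc θ) θ
        simpa [hdiag θ] using h2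
      calc ∑ i, W i * outer (u θ) * (W i)ᴴ
          = ∑ i, outer (W i *ᵥ u θ) :=
            Finset.sum_congr rfl fun i _ => Stmt3Aux.mul_outer_mul _ _
        _ = ∑ i, (cc i θ * star (cc i θ)) • outer (v θ) := by
            refine Finset.sum_congr rfl fun i _ => ?_
            rw [hWu i θ, Stmt3Aux.outer_smul]
        _ = (∑ i, cc i θ * star (cc i θ)) • outer (v θ) := (Finset.sum_smul).symm
        _ = outer (v θ) := by rw [hdd, one_smul]
end
end

section
/- Let {u_θ}_{θ∈Θ} and {v_θ}_{θ∈Θ} be linearly independent families spanning H and K respectively. There exists a completely positive unital map Λ : L(H) → L(K) with Λ(|u_θ⟩⟨u_θ|) = |v_θ⟩⟨v_θ| for all θ if and only if there exists a positive semidefinite matrix H with unit diagonal such that G_V^{-1} = H ∘ G_U^{-1}. -/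
open Matrix Finset
open scoped ComplexOrder

noncomputable section

namespace Stmt4Aux

variable {Θ : Type*} [Fintype Θ] [DecidableEq Θ] {n : ℕ}

/-- Matrix whose columns are the vectors of the family. -/
def fam (u : Θ → (Fin n → ℂ)) : Matrix (Fin n) Θ ℂ := Matrix.of fun i θ => u θ i

lemma gram_eq (u : Θ → (Fin n → ℂ)) : gram u = (fam u)ᴴ * fam u := by
  ext θ θ'
  simp [_root_.gram, fam, Matrix.mul_apply, dotProduct, Matrix.conjTranspose_apply]

lemma gram_isHermitian (u : Θ → (Fin n → ℂ)) : (gram u).IsHermitian := by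
  rw [gram_eq]; exact Matrix.isHermitian_conjTranspose_mul_self _

lemma fam_mulVec_single (u : Θ → (Fin n → ℂ)) (θ : Θ) :
    (fam u).mulVec (Pi.single θ 1) = u θ := by
  funext i
  simp [fam, Matrix.mulVec, dotProduct, Pi.single_apply]

lemma card_eq (u : Θ → (Fin n → ℂ)) (hu : LinearIndependent ℂ u)
    (hus : Submodule.span ℂ (Set.range u) = ⊤) : Fintype.card Θ = n := by
  let b : Module.Basis Θ ℂ (Fin n → ℂ) := Module.Basis.mk hu (by rw [hus])
  have := Module.finrank_eq_card_basis b
  rw [Module.finrank_fin_fun] at this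
  omega

lemma key (u : Θ → (Fin n → ℂ)) (hu : LinearIndependent ℂ u)
    (hus : Submodule.span ℂ (Set.range u) = ⊤) :
    IsUnit (gram u).det ∧ fam u * (gram u)⁻¹ * (fam u)ᴴ = 1 := by
  have hcard : Fintype.card Θ = n := card_eq u hu hus
  let e : Θ ≃ Fin n := Fintype.equivFinOfCardEq hcard
  set Usq : Matrix (Fin n) (Fin n) ℂ := (fam u).submatrix id e.symm with hUsq
  have hUnit : IsUnit Usq := by
    rw [← Matrix.linearIndependent_cols_iff_isUnit]
    have hc : (fun i => Usqᵀ i) = fun i => u (e.symm i) := by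
      funext i; funext j; simp [hUsq, fam]
    rw [show Usq.col = fun i => Usqᵀ i from rfl, hc]
    exact hu.comp e.symm e.symm.injective
  have hUnit2 : IsUnit (Usqᴴ * Usq) := ((Matrix.isUnit_conjTranspose Usq).mpr hUnit).mul hUnit
  have hsub : fam u = Usq.submatrix id e := by
    ext i θ; simp [hUsq, fam]
  have hgram : gram u = (Usqᴴ * Usq).submatrix e e := by
    rw [gram_eq, hsub]
    ext θ θ'
    simp [Matrix.mul_apply]
  have hgraminv : (gram u)⁻¹ = ((Usqᴴ * Usq)⁻¹).submatrix e e := by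
    rw [hgram]
    rw [show ((Usqᴴ * Usq)).submatrix e e = (Matrix.reindex e.symm e.symm) (Usqᴴ * Usq) from rfl,
        Matrix.inv_reindex]
    rfl
  constructor
  · rw [hgram, Matrix.det_submatrix_equiv_self]
    exact (Matrix.isUnit_iff_isUnit_det _).mp hUnit2
  · rw [hsub, hgraminv]
    have hds : (Usq.submatrix id e)ᴴ = Usqᴴ.submatrix e id := by
      ext θ i; simp
    rw [hds]
    rw [Matrix.submatrix_mul_equiv, Matrix.submatrix_mul_equiv]
    have hdet : IsUnit Usq.det := (Matrix.isUnit_iff_isUnit_det _).mp hUnit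
    have hdetH : IsUnit (Usqᴴ).det :=
      (Matrix.isUnit_iff_isUnit_det _).mp ((Matrix.isUnit_conjTranspose Usq).mpr hUnit)
    rw [Matrix.mul_inv_rev, ← Matrix.mul_assoc, Matrix.mul_nonsing_inv _ hdet,
      Matrix.one_mul, Matrix.nonsing_inv_mul _ hdetH, Matrix.submatrix_id_id]

lemma recover {m : ℕ} (v : Θ → (Fin m → ℂ)) (hgv : IsUnit (gram v).det)
    (A : Matrix Θ Θ ℂ) :
    (gram v)⁻¹ * (fam v)ᴴ * (fam v * A * (fam v)ᴴ) * (fam v * (gram v)⁻¹) = A := by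
  have e1 : (gram v)⁻¹ * ((fam v)ᴴ * fam v) = 1 := by
    rw [← gram_eq]; exact Matrix.nonsing_inv_mul _ hgv
  have e2 : (fam v)ᴴ * fam v * (gram v)⁻¹ = 1 := by
    rw [← gram_eq]; exact Matrix.mul_nonsing_inv _ hgv
  calc (gram v)⁻¹ * (fam v)ᴴ * (fam v * A * (fam v)ᴴ) * (fam v * (gram v)⁻¹)
      = ((gram v)⁻¹ * ((fam v)ᴴ * fam v)) * A * ((fam v)ᴴ * fam v * (gram v)⁻¹) := by
        simp only [Matrix.mul_assoc]
    _ = A := by rw [e1, e2, one_mul, mul_one]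

lemma expand {m : ℕ} (v : Θ → (Fin m → ℂ)) (A : Matrix Θ Θ ℂ) :
    fam v * A * (fam v)ᴴ = ∑ θ : Θ, ∑ θ' : Θ, A θ θ' • Matrix.vecMulVec (v θ) (star (v θ')) := by
  ext i j
  simp only [Matrix.mul_apply, Matrix.conjTranspose_apply, Matrix.sum_apply, Matrix.smul_apply,
    Matrix.vecMulVec_apply, fam, Matrix.of_apply, Pi.star_apply, smul_eq_mul]
  rw [Finset.sum_comm]
  refine Finset.sum_congr rfl fun θ' _ => ?_
  rw [Finset.sum_mul]
  refine Finset.sum_congr rfl fun θ _ => ?_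
  ring

lemma conj_vecMulVec {m k : ℕ} (A : Matrix (Fin m) (Fin k) ℂ) (x y : Fin k → ℂ) :
    A * Matrix.vecMulVec x (star y) * Aᴴ =
      Matrix.vecMulVec (A.mulVec x) (star (A.mulVec y)) := by
  ext i j
  simp only [Matrix.mul_apply, Matrix.vecMulVec_apply, Matrix.conjTranspose_apply,
    Pi.star_apply, Matrix.mulVec, dotProduct, star_sum, star_mul', Finset.mul_sum,
    Finset.sum_mul]
  refine Finset.sum_congr rfl fun l _ => Finset.sum_congr rfl fun o _ => by ring

lemma vecMulVec_mulVec' {m : ℕ} (a b w : Fin m → ℂ) :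
    (Matrix.vecMulVec a b).mulVec w = (b ⬝ᵥ w) • a := by
  funext i
  simp only [Matrix.mulVec, dotProduct, Matrix.vecMulVec_apply, Pi.smul_apply,
    smul_eq_mul, Finset.sum_mul]
  exact Finset.sum_congr rfl fun j _ => by ring

end Stmt4Aux

namespace Stmt4Aux

lemma star_dot_comm {m : ℕ} (a w : Fin m → ℂ) : star w ⬝ᵥ a = star (star a ⬝ᵥ w) := by
  simp only [dotProduct, star_sum, star_mul', Pi.star_apply, star_star]
  exact Finset.sum_congr rfl fun j _ => by ring

lemma sum_mulVec' {m k : ℕ} (M : Fin k → Matrix (Fin m) (Fin m) ℂ) (w : Fin m → ℂ) :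
    (∑ i, M i).mulVec w = ∑ i, (M i).mulVec w := by
  funext j
  simp only [Matrix.mulVec, dotProduct, Matrix.sum_apply, Finset.sum_apply,
    Finset.sum_mul]
  rw [Finset.sum_comm]

lemma dotProduct_sum' {m k : ℕ} (a : Fin m → ℂ) (y : Fin k → Fin m → ℂ) :
    a ⬝ᵥ (∑ i, y i) = ∑ i, a ⬝ᵥ y i := by
  simp only [dotProduct, Finset.sum_apply, Finset.mul_sum]
  rw [Finset.sum_comm]

lemma rank_one_sum {m k : ℕ} {x : Fin k → Fin m → ℂ} {v : Fin m → ℂ} (hv : v ≠ 0)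
    (h : ∑ i, Matrix.vecMulVec (x i) (star (x i)) = Matrix.vecMulVec v (star v)) :
    ∃ c : Fin k → ℂ, ∀ i, x i = c i • v := by
  have hvv : (star v ⬝ᵥ v) ≠ 0 := fun h0 => hv (dotProduct_star_self_eq_zero.mp h0)
  have key : ∀ w : Fin m → ℂ, star v ⬝ᵥ w = 0 → ∀ i, star (x i) ⬝ᵥ w = 0 := by
    intro w hw
    have h1 := congrArg (fun M : Matrix (Fin m) (Fin m) ℂ => star w ⬝ᵥ M.mulVec w) h
    simp only [sum_mulVec', vecMulVec_mulVec', dotProduct_sum', dotProduct_smul,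
      smul_eq_mul] at h1
    rw [hw] at h1
    simp only [zero_mul, mul_comm] at h1
    -- h1 : ∑ i, (star (x i) ⬝ᵥ w) * (star w ⬝ᵥ x i) = 0
    have h2 : ∑ i, (Complex.normSq (star (x i) ⬝ᵥ w) : ℂ) = 0 := by
      rw [← h1]
      refine Finset.sum_congr rfl fun i _ => ?_
      rw [star_dot_comm (x i) w]
      exact Complex.normSq_eq_conj_mul_self
    have h3 : ∑ i, Complex.normSq (star (x i) ⬝ᵥ w) = 0 := by
      exact_mod_cast h2
    intro i
    have h4 := (Finset.sum_eq_zero_iff_of_nonneg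
      (fun i _ => Complex.normSq_nonneg (star (x i) ⬝ᵥ w))).mp h3 i (Finset.mem_univ i)
    exact Complex.normSq_eq_zero.mp h4
  refine ⟨fun i => (star v ⬝ᵥ x i) / (star v ⬝ᵥ v), fun i => ?_⟩
  set c := (star v ⬝ᵥ x i) / (star v ⬝ᵥ v) with hc
  set w := x i - c • v with hwdef
  have hw : star v ⬝ᵥ w = 0 := by
    rw [hwdef, dotProduct_sub, dotProduct_smul, hc, smul_eq_mul]
    field_simp
    ring
  have hxw : star (x i) ⬝ᵥ w = 0 := key w hw i
  have hww : star w ⬝ᵥ w = 0 := by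
    have : star w ⬝ᵥ w = star (x i) ⬝ᵥ w - star c * (star v ⬝ᵥ w) := by
      rw [hwdef, star_sub, star_smul, sub_dotProduct, smul_dotProduct,
        smul_eq_mul]
    rw [this, hxw, hw, mul_zero, sub_zero]
  have hw0 : w = 0 := dotProduct_star_self_eq_zero.mp hww
  have hw0' : x i - c • v = 0 := hw0
  exact sub_eq_zero.mp hw0'

lemma coeff_sum_one {m k : ℕ} {c : Fin k → ℂ} {v : Fin m → ℂ} (hv : v ≠ 0)
    (h : ∑ i, Matrix.vecMulVec ((c i) • v) (star ((c i) • v)) = Matrix.vecMulVec v (star v)) :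
    ∑ i, c i * star (c i) = 1 := by
  obtain ⟨j, hj⟩ : ∃ j, v j ≠ 0 := by
    by_contra hc
    push_neg at hc
    exact hv (funext hc)
  have h1 := congrFun (congrFun (congrArg (fun M : Matrix (Fin m) (Fin m) ℂ => (M : Matrix _ _ ℂ)) h) j) j
  simp only [Matrix.sum_apply, Matrix.vecMulVec_apply, Pi.star_apply, Pi.smul_apply,
    smul_eq_mul, star_mul'] at h1
  have h2 : (∑ i, c i * star (c i)) * (v j * star (v j)) = v j * star (v j) := by
    conv_rhs => rw [← h1]
    rw [Finset.sum_mul]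
    exact Finset.sum_congr rfl fun i _ => by ring
  have hvj : v j * star (v j) ≠ 0 :=
    mul_ne_zero hj (star_ne_zero.mpr hj)
  exact mul_right_cancel₀ hvj (by rw [one_mul]; exact h2)

end Stmt4Aux

namespace Stmt4Aux

variable {Θ : Type*} [Fintype Θ] [DecidableEq Θ] {n : ℕ}

lemma vecMulVec_smul_smul {m : ℕ} (a b : ℂ) (x y : Fin m → ℂ) :
    Matrix.vecMulVec (a • x) (star (b • y)) = (a * star b) • Matrix.vecMulVec x (star y) := by
  ext i j
  simp only [Matrix.vecMulVec_apply, Pi.smul_apply, Pi.star_apply, smul_eq_mul,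
    Matrix.smul_apply, star_mul']
  ring

lemma collapse (u : Θ → (Fin n → ℂ)) (hg : IsUnit (gram u).det) {p : Type*} [Fintype p]
    (Y : Matrix Θ p ℂ) :
    (gram u)⁻¹ * ((fam u)ᴴ * (fam u * Y)) = Y := by
  rw [← Matrix.mul_assoc (fam u)ᴴ, ← gram_eq, ← Matrix.mul_assoc,
    Matrix.nonsing_inv_mul _ hg, Matrix.one_mul]

lemma graminv_herm (u : Θ → (Fin n → ℂ)) : ((gram u)⁻¹)ᴴ = (gram u)⁻¹ := by
  rw [Matrix.conjTranspose_nonsing_inv, (gram_isHermitian u).eq]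

end Stmt4Aux


theorem stmt4 {Θ : Type*} [Fintype Θ] [DecidableEq Θ] {n m : ℕ}
    (u : Θ → (Fin n → ℂ)) (v : Θ → (Fin m → ℂ))
    (hu : LinearIndependent ℂ u) (hv : LinearIndependent ℂ v)
    (hus : Submodule.span ℂ (Set.range u) = ⊤)
    (hvs : Submodule.span ℂ (Set.range v) = ⊤) :
    (∃ Λ : Matrix (Fin n) (Fin n) ℂ →ₗ[ℂ] Matrix (Fin m) (Fin m) ℂ,
        IsCPMap Λ ∧ IsUnital Λ ∧ ∀ θ, Λ (outer (u θ)) = outer (v θ)) ↔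
      ∃ H : Matrix Θ Θ ℂ, H.PosSemidef ∧ (∀ θ, H θ θ = 1) ∧
        (gram v)⁻¹ = Matrix.hadamard H (gram u)⁻¹ := by
  classical
  obtain ⟨hgu, hUGU⟩ := Stmt4Aux.key u hu hus
  obtain ⟨hgv, hVGV⟩ := Stmt4Aux.key v hv hvs
  constructor
  · rintro ⟨Λ, ⟨k, W, hW⟩, hunital, houter⟩
    have hvne : ∀ θ, v θ ≠ 0 := fun θ => hv.ne_zero θ
    have main : ∀ θ, ∑ i, Matrix.vecMulVec ((W i).mulVec (u θ))
        (star ((W i).mulVec (u θ))) = Matrix.vecMulVec (v θ) (star (v θ)) := by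
      intro θ
      have h0 := houter θ
      rw [hW] at h0
      simpa only [outer, Stmt4Aux.conj_vecMulVec] using h0
    choose c hc using fun θ => Stmt4Aux.rank_one_sum (hvne θ) (main θ)
    set K : Matrix Θ Θ ℂ := Matrix.of fun θ θ' => ∑ i, c θ i * star (c θ' i) with hK
    have hKpsd : K.PosSemidef := by
      have : K = (Matrix.of fun (i : Fin k) (θ : Θ) => star (c θ i))ᴴ *
          (Matrix.of fun (i : Fin k) (θ : Θ) => star (c θ i)) := by
        ext θ θ'
        simp [hK, Matrix.mul_apply]
      rw [this]
      exact Matrix.posSemidef_conjTranspose_mul_self _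
    have hKdiag : ∀ θ, K θ θ = 1 := by
      intro θ
      have h1 := main θ
      simp only [hc] at h1
      exact Stmt4Aux.coeff_sum_one (hvne θ) h1
    have hΛ1 : Λ 1 = Stmt4Aux.fam v * (Matrix.hadamard K (gram u)⁻¹) * (Stmt4Aux.fam v)ᴴ := by
      conv_lhs => rw [← hUGU, Stmt4Aux.expand u ((gram u)⁻¹)]
      rw [Stmt4Aux.expand v (Matrix.hadamard K (gram u)⁻¹), map_sum]
      refine Finset.sum_congr rfl fun θ _ => ?_
      rw [map_sum]
      refine Finset.sum_congr rfl fun θ' _ => ?_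
      rw [_root_.map_smul, hW]
      have h2 : ∑ i, W i * Matrix.vecMulVec (u θ) (star (u θ')) * (W i)ᴴ
          = (∑ i, c θ i * star (c θ' i)) • Matrix.vecMulVec (v θ) (star (v θ')) := by
        rw [Finset.sum_smul]
        refine Finset.sum_congr rfl fun i _ => ?_
        rw [Stmt4Aux.conj_vecMulVec, hc θ i, hc θ' i, Stmt4Aux.vecMulVec_smul_smul]
      rw [h2, smul_smul]
      congr 1
      simp only [Matrix.hadamard_apply, hK, Matrix.of_apply]
      ring
    refine ⟨K, hKpsd, hKdiag, ?_⟩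
    have e1 : Stmt4Aux.fam v * (Matrix.hadamard K (gram u)⁻¹) * (Stmt4Aux.fam v)ᴴ
        = Stmt4Aux.fam v * (gram v)⁻¹ * (Stmt4Aux.fam v)ᴴ := by
      rw [← hΛ1, hunital, hVGV]
    have e2 := congrArg
      (fun M => (gram v)⁻¹ * (Stmt4Aux.fam v)ᴴ * M * (Stmt4Aux.fam v * (gram v)⁻¹)) e1
    simp only [Stmt4Aux.recover v hgv] at e2
    exact e2.symm
  · rintro ⟨H, hpsd, hdiag, heq⟩
    obtain ⟨B, hB⟩ : ∃ B : Matrix Θ Θ ℂ, H = Bᴴ * B := by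
      open scoped MatrixOrder in
      obtain ⟨X, hX, -, rfl⟩ := CFC.exists_sqrt_of_isSelfAdjoint_of_quasispectrumRestricts
        hpsd.isHermitian (QuasispectrumRestricts.nnreal_of_nonneg hpsd.nonneg)
      exact ⟨X, by rw [show Xᴴ = X from hX.star_eq]⟩
    set k := Fintype.card Θ with hk
    set e : Fin k ≃ Θ := (Fintype.equivFin Θ).symm with he
    set cc : Fin k → Θ → ℂ := fun i θ => star (B (e i) θ) with hcc
    have hH : ∀ θ θ', H θ θ' = ∑ i, cc i θ * star (cc i θ') := by
      intro θ θ'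
      rw [hB, Matrix.mul_apply, ← Equiv.sum_comp e (fun j => Bᴴ θ j * B j θ')]
      refine Finset.sum_congr rfl fun i _ => ?_
      simp only [hcc, Matrix.conjTranspose_apply, star_star]
    set W : Fin k → Matrix (Fin m) (Fin n) ℂ :=
      fun i => Stmt4Aux.fam v * Matrix.diagonal (cc i) * (gram u)⁻¹ * (Stmt4Aux.fam u)ᴴ
      with hWdef
    have hWu : ∀ i θ, (W i).mulVec (u θ) = cc i θ • v θ := by
      intro i θ
      have h1 : W i * Stmt4Aux.fam u = Stmt4Aux.fam v * Matrix.diagonal (cc i) := by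
        simp only [hWdef, Matrix.mul_assoc]
        rw [← Stmt4Aux.gram_eq, Matrix.nonsing_inv_mul _ hgu, Matrix.mul_one]
      rw [← Stmt4Aux.fam_mulVec_single u θ, Matrix.mulVec_mulVec, h1, ← Matrix.mulVec_mulVec,
        Matrix.diagonal_mulVec_single, mul_one]
      have h2 : Pi.single θ (cc i θ) = cc i θ • (Pi.single θ 1 : Θ → ℂ) := by
        funext j
        simp [Pi.single_apply, mul_ite]
      rw [h2, Matrix.mulVec_smul, Stmt4Aux.fam_mulVec_single]
    refine ⟨{ toFun := fun X => ∑ i, W i * X * (W i)ᴴ,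
              map_add' := fun X Y => by
                simp [Matrix.mul_add, Matrix.add_mul, Finset.sum_add_distrib],
              map_smul' := fun r X => by
                simp [Matrix.mul_smul, Matrix.smul_mul, Finset.smul_sum] },
      ⟨k, W, fun X => rfl⟩, ?_, ?_⟩
    · show ∑ i, W i * 1 * (W i)ᴴ = 1
      have hWH : ∀ i, (W i)ᴴ =
          Stmt4Aux.fam u * ((gram u)⁻¹ * ((Matrix.diagonal (cc i))ᴴ * (Stmt4Aux.fam v)ᴴ)) := by
        intro i
        simp only [hWdef, Matrix.conjTranspose_mul, Matrix.conjTranspose_conjTranspose,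
          Stmt4Aux.graminv_herm, Matrix.mul_assoc]
      have hWW : ∀ i, W i * (W i)ᴴ = Stmt4Aux.fam v *
          (Matrix.diagonal (cc i) * (gram u)⁻¹ * (Matrix.diagonal (cc i))ᴴ) *
          (Stmt4Aux.fam v)ᴴ := by
        intro i
        rw [hWH i]
        simp only [hWdef, Matrix.mul_assoc]
        rw [Stmt4Aux.collapse u hgu]
      simp only [Matrix.mul_one]
      simp only [hWW]
      rw [← Matrix.sum_mul, ← Matrix.mul_sum]
      have hmid : (∑ i, Matrix.diagonal (cc i) * (gram u)⁻¹ * (Matrix.diagonal (cc i))ᴴ)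
          = Matrix.hadamard H (gram u)⁻¹ := by
        ext θ θ'
        simp only [Matrix.sum_apply, Matrix.diagonal_conjTranspose, Matrix.mul_diagonal,
          Matrix.diagonal_mul, Matrix.hadamard_apply, hH θ θ', Finset.sum_mul, Pi.star_apply]
        exact Finset.sum_congr rfl fun i _ => by ring
      rw [hmid, ← heq]
      exact hVGV
    · intro θ
      show ∑ i, W i * outer (u θ) * (W i)ᴴ = outer (v θ)
      calc ∑ i, W i * outer (u θ) * (W i)ᴴ
          = ∑ i, (cc i θ * star (cc i θ)) • Matrix.vecMulVec (v θ) (star (v θ)) := by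
            refine Finset.sum_congr rfl fun i _ => ?_
            rw [show outer (u θ) = Matrix.vecMulVec (u θ) (star (u θ)) from rfl,
              Stmt4Aux.conj_vecMulVec, hWu i θ, Stmt4Aux.vecMulVec_smul_smul]
        _ = outer (v θ) := by
            rw [← Finset.sum_smul, ← hH θ θ, hdiag θ, one_smul]
            rfl
end
end

section
/- Let {u_θ}_{θ∈Θ} be a linearly independent family spanning H with Gram matrix G_U, and let {M_θ}_{θ∈Θ} be positive semidefinite operators on K. There exists a completely positive subunital map Λ : L(H) → L(K) with Λ(|u_θ⟩⟨u_θ|) = M_θ for all θ if and only if there exist operators M_{θ,θ'} ∈ L(K) with M_{θ,θ} = M_θ, the block matrix [M_{θ,θ'}]_{θ,θ'} positive semidefinite, and Σ_{θ,θ'} (G_U^{-1})_{θ,θ'} M_{θ,θ'} ≤ I_K. -/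
open Matrix Finset
open scoped ComplexOrder

noncomputable section

lemma psd_vecMulVec {ι : Type*} [Fintype ι] (w : ι → ℂ) :
    (vecMulVec w (star w)).PosSemidef := by
  have h : vecMulVec w (star w)
      = (Matrix.of fun i (_ : Fin 1) => w i) * (Matrix.of fun i (_ : Fin 1) => w i)ᴴ := by
    ext i j
    simp [vecMulVec_apply, Matrix.mul_apply]
  rw [h]
  exact posSemidef_self_mul_conjTranspose _

lemma psd_sum {ι m' : Type*} [Fintype m'] (s : Finset ι) (f : ι → Matrix m' m' ℂ)
    (h : ∀ i ∈ s, (f i).PosSemidef) : (∑ i ∈ s, f i).PosSemidef :=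
  Finset.sum_induction f _ (fun _ _ ha hb => ha.add hb) (Matrix.PosSemidef.zero) h

lemma mul_vecMulVec_mul {m n : ℕ} (W : Matrix (Fin m) (Fin n) ℂ) (a b : Fin n → ℂ) :
    W * vecMulVec a (star b) * Wᴴ = vecMulVec (W *ᵥ a) (star (W *ᵥ b)) := by
  ext p q
  simp only [Matrix.mul_apply, vecMulVec_apply, Pi.star_apply, mulVec, dotProduct,
    conjTranspose_apply, Finset.sum_mul, Finset.mul_sum, star_sum, star_mul']
  refine Finset.sum_congr rfl fun j _ => Finset.sum_congr rfl fun i _ => ?_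
  ring

section Gram

variable {Θ : Type*} [Fintype Θ] [DecidableEq Θ] {n : ℕ} (u : Θ → (Fin n → ℂ))

def Umat : Matrix (Fin n) Θ ℂ := Matrix.of fun i θ => u θ i

omit [Fintype Θ] [DecidableEq Θ] in
lemma gram_eq : gram u = (Umat u)ᴴ * Umat u := by
  ext θ θ'
  simp [_root_.gram, Umat, Matrix.mul_apply, dotProduct, conjTranspose_apply]

lemma Umat_mulVec_single (θ : Θ) : Umat u *ᵥ Pi.single θ 1 = u θ := by
  ext i
  simp [Umat, mulVec, dotProduct, Pi.single_apply]

lemma gram_det_isUnit (hu : LinearIndependent ℂ u) : IsUnit (gram u).det := by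
  rw [isUnit_iff_ne_zero]
  intro hdet
  obtain ⟨v, hv0, hv⟩ := (Matrix.exists_mulVec_eq_zero_iff).2 hdet
  have h0 : star (Umat u *ᵥ v) ⬝ᵥ (Umat u *ᵥ v) = 0 := by
    have : star v ⬝ᵥ (gram u *ᵥ v) = 0 := by rw [hv, dotProduct_zero]
    rwa [gram_eq, ← Matrix.mulVec_mulVec, Matrix.dotProduct_mulVec, ← Matrix.star_mulVec] at this
  have hUv : Umat u *ᵥ v = 0 := dotProduct_star_self_eq_zero.mp h0
  have := Fintype.linearIndependent_iff.mp hu v ?_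
  · exact hv0 (funext this)
  · funext i
    have := congrFun hUv i
    simpa [Umat, mulVec, dotProduct, mul_comm] using this

lemma gram_inv_mul (hu : LinearIndependent ℂ u) : (gram u)⁻¹ * gram u = 1 :=
  Matrix.nonsing_inv_mul _ (gram_det_isUnit u hu)

lemma key_proj (hu : LinearIndependent ℂ u) (hus : Submodule.span ℂ (Set.range u) = ⊤) :
    Umat u * (gram u)⁻¹ * (Umat u)ᴴ = 1 := by
  set P := Umat u * (gram u)⁻¹ * (Umat u)ᴴ with hP
  have hPU : P * Umat u = Umat u := by
    rw [hP, Matrix.mul_assoc, ← gram_eq u, Matrix.mul_assoc, gram_inv_mul u hu,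
      Matrix.mul_one]
  have hid : P.mulVecLin = LinearMap.id := by
    refine LinearMap.ext_on hus ?_
    rintro x ⟨θ, rfl⟩
    have : P *ᵥ u θ = u θ := by
      rw [← Umat_mulVec_single u θ, Matrix.mulVec_mulVec, hPU]
    simpa using this
  ext i j
  have := congrFun (LinearMap.congr_fun hid (Pi.single j 1)) i
  simp only [Matrix.mulVecLin_apply, LinearMap.id_coe, id_eq] at this
  have hcol : (P *ᵥ Pi.single j 1) i = P i j := by
    simp [mulVec, dotProduct, Pi.single_apply]
  rw [hcol] at this
  rw [this, Matrix.one_apply, Pi.single_apply]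

lemma one_eq_sum (hu : LinearIndependent ℂ u) (hus : Submodule.span ℂ (Set.range u) = ⊤) :
    (1 : Matrix (Fin n) (Fin n) ℂ)
      = ∑ θ, ∑ θ', ((gram u)⁻¹ θ θ') • vecMulVec (u θ) (star (u θ')) := by
  rw [← key_proj u hu hus]
  ext i j
  simp only [Matrix.sum_apply, Matrix.smul_apply, vecMulVec_apply, Pi.star_apply,
    Matrix.mul_apply, conjTranspose_apply, smul_eq_mul, Umat, of_apply, Finset.sum_mul]
  rw [Finset.sum_comm]
  refine Finset.sum_congr rfl fun θ _ => Finset.sum_congr rfl fun θ' _ => ?_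
  ring

end Gram

theorem stmt8 {Θ : Type*} [Fintype Θ] [DecidableEq Θ] {n m : ℕ}
    (u : Θ → (Fin n → ℂ))
    (hu : LinearIndependent ℂ u)
    (hus : Submodule.span ℂ (Set.range u) = ⊤)
    (M : Θ → Matrix (Fin m) (Fin m) ℂ) (hM : ∀ θ, (M θ).PosSemidef) :
    (∃ Λ : Matrix (Fin n) (Fin n) ℂ →ₗ[ℂ] Matrix (Fin m) (Fin m) ℂ,
        IsCPMap Λ ∧ IsSubunital Λ ∧ ∀ θ, Λ (outer (u θ)) = M θ) ↔
      ∃ Mb : Θ → Θ → Matrix (Fin m) (Fin m) ℂ,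
        (∀ θ, Mb θ θ = M θ) ∧
        (Matrix.of fun (p q : Fin m × Θ) => Mb p.2 q.2 p.1 q.1).PosSemidef ∧
        ((1 : Matrix (Fin m) (Fin m) ℂ) -
          ∑ θ, ∑ θ', ((gram u)⁻¹ θ θ') • Mb θ θ').PosSemidef := by
  constructor
  · rintro ⟨Λ, ⟨k, W, hW⟩, hsub, hΛ⟩
    refine ⟨fun θ θ' => Λ (vecMulVec (u θ) (star (u θ'))), fun θ => hΛ θ, ?_, ?_⟩
    · have hrep : (Matrix.of fun (p q : Fin m × Θ) =>
          (Λ (vecMulVec (u p.2) (star (u q.2)))) p.1 q.1)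
          = ∑ i : Fin k, vecMulVec (fun x : Fin m × Θ => (W i *ᵥ u x.2) x.1)
              (star fun x : Fin m × Θ => (W i *ᵥ u x.2) x.1) := by
        ext x y
        simp only [of_apply, hW, Matrix.sum_apply]
        refine Finset.sum_congr rfl fun i _ => ?_
        rw [mul_vecMulVec_mul]
        simp [vecMulVec_apply]
      rw [hrep]
      exact psd_sum _ _ fun i _ => psd_vecMulVec _
    · have hΛ1 : Λ 1 = ∑ θ, ∑ θ', ((gram u)⁻¹ θ θ') • Λ (vecMulVec (u θ) (star (u θ'))) := by
        conv_lhs => rw [one_eq_sum u hu hus]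
        rw [map_sum]
        refine Finset.sum_congr rfl fun θ _ => ?_
        rw [map_sum]
        exact Finset.sum_congr rfl fun θ' _ => Λ.map_smul _ _
      rw [← hΛ1]
      exact hsub
  · rintro ⟨Mb, hdiag, hpsd, hsum⟩
    obtain ⟨C, hC⟩ : ∃ C : Matrix (Fin m × Θ) (Fin m × Θ) ℂ,
        (Matrix.of fun (p q : Fin m × Θ) => Mb p.2 q.2 p.1 q.1) = Cᴴ * C := by
      open scoped MatrixOrder in exact CStarAlgebra.nonneg_iff_eq_star_mul_self.mp hpsd.nonneg
    set D : Matrix Θ (Fin n) ℂ := (gram u)⁻¹ * (Umat u)ᴴ with hD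
    set Wk : (Fin m × Θ) → Matrix (Fin m) (Fin n) ℂ :=
      fun k => (Matrix.of fun p θ => star (C k (p, θ))) * D with hWk
    set Λ : Matrix (Fin n) (Fin n) ℂ →ₗ[ℂ] Matrix (Fin m) (Fin m) ℂ :=
      { toFun := fun X => ∑ k : Fin m × Θ, Wk k * X * (Wk k)ᴴ
        map_add' := fun X Y => by
          simp [Matrix.mul_add, Matrix.add_mul, Finset.sum_add_distrib]
        map_smul' := fun c X => by
          simp [Matrix.mul_smul, Matrix.smul_mul, Finset.smul_sum] } with hΛdef
    have hΛapp : ∀ X, Λ X = ∑ k : Fin m × Θ, Wk k * X * (Wk k)ᴴ := fun X => rfl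
    have hDU : D * Umat u = 1 := by
      rw [hD, Matrix.mul_assoc, ← gram_eq u, gram_inv_mul u hu]
    have hWu : ∀ (k : Fin m × Θ) (θ : Θ),
        Wk k *ᵥ u θ = fun p => star (C k (p, θ)) := by
      intro k θ
      rw [hWk, ← Umat_mulVec_single u θ, Matrix.mulVec_mulVec, Matrix.mul_assoc, hDU,
        Matrix.mul_one]
      ext p
      simp [mulVec, dotProduct, Pi.single_apply]
    have hkey : ∀ θ θ', Λ (vecMulVec (u θ) (star (u θ'))) = Mb θ θ' := by
      intro θ θ'
      rw [hΛapp]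
      ext p q
      rw [Matrix.sum_apply]
      have h2 : Mb θ θ' p q = ∑ k : Fin m × Θ, star (C k (p, θ)) * C k (q, θ') := by
        have h3 := congrFun (congrFun hC (p, θ)) (q, θ')
        simpa [Matrix.mul_apply, conjTranspose_apply] using h3
      rw [h2]
      refine Finset.sum_congr rfl fun kk _ => ?_
      rw [mul_vecMulVec_mul, hWu kk θ, hWu kk θ']
      simp [vecMulVec_apply]
    refine ⟨Λ, ?_, ?_, ?_⟩
    · exact ⟨Fintype.card (Fin m × Θ), fun i => Wk ((Fintype.equivFin (Fin m × Θ)).symm i),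
        fun X => by rw [hΛapp]; exact (Equiv.sum_comp (Fintype.equivFin (Fin m × Θ)).symm
          (fun kk => Wk kk * X * (Wk kk)ᴴ)).symm⟩
    · have hΛ1 : Λ 1 = ∑ θ, ∑ θ', ((gram u)⁻¹ θ θ') • Mb θ θ' := by
        conv_lhs => rw [one_eq_sum u hu hus]
        rw [map_sum]
        refine Finset.sum_congr rfl fun θ _ => ?_
        rw [map_sum]
        refine Finset.sum_congr rfl fun θ' _ => ?_
        rw [Λ.map_smul, hkey θ θ']
      show ((1 : Matrix (Fin m) (Fin m) ℂ) - Λ 1).PosSemidef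
      rw [hΛ1]
      exact hsum
    · intro θ
      have := hkey θ θ
      rw [hdiag] at this
      exact this
end
end

section
/- With the hypotheses of the previous setting ({u_θ} linearly independent spanning H, {M_θ} positive operators on K), there exists a completely positive unital map Λ with Λ(|u_θ⟩⟨u_θ|) = M_θ for all θ if and only if there exist M_{θ,θ'} with M_{θ,θ}=M_θ, the block matrix [M_{θ,θ'}] positive semidefinite, and Σ_{θ,θ'} (G_U^{-1})_{θ,θ'} M_{θ,θ'} = I_K. -/
open Matrix Finset
open scoped ComplexOrder

noncomputable section

lemma aux_sandwich {α β : Type*} [Fintype β] (V : Matrix α β ℂ) (a c : β → ℂ) :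
    V * Matrix.vecMulVec a (star c) * Vᴴ = Matrix.vecMulVec (V *ᵥ a) (star (V *ᵥ c)) := by
  ext θ θ'
  simp only [Matrix.mul_apply, Matrix.vecMulVec_apply, Matrix.conjTranspose_apply,
    Pi.star_apply, Matrix.mulVec, dotProduct, star_sum, star_mul', Finset.sum_mul,
    Finset.mul_sum]
  exact Finset.sum_congr rfl fun s _ => Finset.sum_congr rfl fun t _ => by ring

lemma aux_keySum {Θ : Type*} [Fintype Θ] {m : ℕ} (P Q : Matrix (Fin m) Θ ℂ) (A : Matrix Θ Θ ℂ) :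
    ∑ θ : Θ, ∑ θ' : Θ, A θ θ' • Matrix.vecMulVec (fun p => P p θ) (fun q => star (Q q θ'))
      = P * A * Qᴴ := by
  ext p q
  simp only [Matrix.sum_apply, Matrix.smul_apply, Matrix.vecMulVec_apply, Matrix.mul_apply,
    Matrix.conjTranspose_apply, smul_eq_mul, Finset.sum_mul]
  rw [Finset.sum_comm]
  exact Finset.sum_congr rfl fun θ' _ => Finset.sum_congr rfl fun θ _ => by ring

theorem stmt9 {Θ : Type*} [Fintype Θ] [DecidableEq Θ] {n m : ℕ}
    (u : Θ → (Fin n → ℂ))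
    (hu : LinearIndependent ℂ u)
    (hus : Submodule.span ℂ (Set.range u) = ⊤)
    (M : Θ → Matrix (Fin m) (Fin m) ℂ) (hM : ∀ θ, (M θ).PosSemidef) :
    (∃ Λ : Matrix (Fin n) (Fin n) ℂ →ₗ[ℂ] Matrix (Fin m) (Fin m) ℂ,
        IsCPMap Λ ∧ IsUnital Λ ∧ ∀ θ, Λ (outer (u θ)) = M θ) ↔
      ∃ Mb : Θ → Θ → Matrix (Fin m) (Fin m) ℂ,
        (∀ θ, Mb θ θ = M θ) ∧
        (Matrix.of fun (p q : Fin m × Θ) => Mb p.2 q.2 p.1 q.1).PosSemidef ∧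
        (∑ θ, ∑ θ', ((gram u)⁻¹ θ θ') • Mb θ θ') = (1 : Matrix (Fin m) (Fin m) ℂ) := by
  classical
  -- The matrix whose columns are the vectors `u θ`.
  set U : Matrix (Fin n) Θ ℂ := Matrix.of fun p θ => u θ p with hUdef
  have hUcol : ∀ θ, (fun p => U p θ) = u θ := fun θ => rfl
  -- `U` is invertible as a linear map.
  have hbij : Function.Bijective (Matrix.toLin' U) := by
    constructor
    · rw [← LinearMap.ker_eq_bot]
      rw [show Matrix.toLin' U = U.mulVecLin from rfl, Matrix.ker_mulVecLin_eq_bot_iff]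
      intro v hv
      funext θ
      refine Fintype.linearIndependent_iff.mp hu v ?_ θ
      funext p
      have := congrFun hv p
      simpa [hUdef, Matrix.mulVec, dotProduct, mul_comm] using this
    · rw [← LinearMap.range_eq_top]
      rw [show Matrix.toLin' U = U.mulVecLin from rfl, Matrix.range_mulVecLin]
      have : Set.range U.col = Set.range u := by
        congr 1
      rw [this]
      exact hus
  set e : (Θ → ℂ) ≃ₗ[ℂ] (Fin n → ℂ) := LinearEquiv.ofBijective (Matrix.toLin' U) hbij with hedef
  set V : Matrix Θ (Fin n) ℂ := LinearMap.toMatrix' (e.symm : (Fin n → ℂ) →ₗ[ℂ] (Θ → ℂ)) with hVdef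
  have hVU : V * U = 1 := by
    have h1 : LinearMap.toMatrix' (Matrix.toLin' U) = U := LinearMap.toMatrix'_toLin' U
    rw [← h1, hVdef, ← LinearMap.toMatrix'_comp]
    rw [show ((e.symm : (Fin n → ℂ) →ₗ[ℂ] (Θ → ℂ)).comp (Matrix.toLin' U)) = LinearMap.id from
      LinearMap.ext fun x => e.symm_apply_apply x]
    exact LinearMap.toMatrix'_id
  have hUV : U * V = 1 := by
    have h1 : LinearMap.toMatrix' (Matrix.toLin' U) = U := LinearMap.toMatrix'_toLin' U
    rw [← h1, hVdef, ← LinearMap.toMatrix'_comp]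
    rw [show ((Matrix.toLin' U).comp (e.symm : (Fin n → ℂ) →ₗ[ℂ] (Θ → ℂ))) = LinearMap.id from
      LinearMap.ext fun x => e.apply_symm_apply x]
    exact LinearMap.toMatrix'_id
  have hG : gram u = Uᴴ * U := by
    ext θ θ'
    simp [_root_.gram, Matrix.mul_apply, Matrix.conjTranspose_apply, dotProduct, hUdef]
  have hGinv : (gram u)⁻¹ = V * Vᴴ := by
    apply Matrix.inv_eq_right_inv
    rw [hG, Matrix.mul_assoc, ← Matrix.mul_assoc U V, hUV, Matrix.one_mul,
      ← Matrix.conjTranspose_mul, hVU, Matrix.conjTranspose_one]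
  have hsingle : ∀ θ0, V *ᵥ u θ0 = Pi.single θ0 1 := by
    intro θ0
    have hu0 : U *ᵥ Pi.single θ0 1 = u θ0 := by
      ext p; simp [Matrix.mulVec_single, hUdef]
    rw [← hu0, Matrix.mulVec_mulVec, hVU, Matrix.one_mulVec]
  -- the resolution of identity
  have hid : ∑ θ, ∑ θ', ((gram u)⁻¹ θ θ') • Matrix.vecMulVec (u θ) (star (u θ'))
      = (1 : Matrix (Fin n) (Fin n) ℂ) := by
    have hUcol' : ∀ θ', (fun q => star (U q θ')) = star (u θ') := fun _ => rfl
    have := aux_keySum U U ((gram u)⁻¹)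
    simp only [hUcol, hUcol'] at this
    rw [this, hGinv, ← Matrix.mul_assoc U V Vᴴ, hUV, Matrix.one_mul,
      ← Matrix.conjTranspose_mul, hUV, Matrix.conjTranspose_one]
  constructor
  · rintro ⟨Λ, ⟨k, W, hW⟩, hunit, hout⟩
    refine ⟨fun θ θ' => Λ (Matrix.vecMulVec (u θ) (star (u θ'))), fun θ => hout θ, ?_, ?_⟩
    · set C : Matrix (Fin k) (Fin m × Θ) ℂ :=
        Matrix.of fun i pθ => star ((W i *ᵥ u pθ.2) pθ.1) with hCdef
      have hB : (Matrix.of fun (p q : Fin m × Θ) =>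
          Λ (Matrix.vecMulVec (u p.2) (star (u q.2))) p.1 q.1) = Cᴴ * C := by
        ext ⟨p, θ⟩ ⟨q, θ'⟩
        have hsw : ∀ i : Fin k, W i * Matrix.vecMulVec (u θ) (star (u θ')) * (W i)ᴴ
            = Matrix.vecMulVec (W i *ᵥ u θ) (star (W i *ᵥ u θ')) :=
          fun i => aux_sandwich _ _ _
        simp only [Matrix.of_apply, hW, Matrix.sum_apply, hsw, Matrix.vecMulVec_apply]
        simp only [Matrix.mul_apply, Matrix.conjTranspose_apply, hCdef, Matrix.of_apply,
          star_star, Pi.star_apply]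
      rw [hB]
      exact Matrix.posSemidef_conjTranspose_mul_self C
    · have h2 : Λ (∑ θ, ∑ θ', ((gram u)⁻¹ θ θ') • Matrix.vecMulVec (u θ) (star (u θ')))
          = ∑ θ, ∑ θ', ((gram u)⁻¹ θ θ') • Λ (Matrix.vecMulVec (u θ) (star (u θ'))) := by
        rw [map_sum]
        exact Finset.sum_congr rfl fun θ _ => by rw [map_sum]; simp only [_root_.map_smul]
      rw [← h2, hid]
      exact hunit
  · rintro ⟨Mb, hdiag, hPSD, hsum⟩
    obtain ⟨C, hC⟩ : ∃ C : Matrix (Fin m × Θ) (Fin m × Θ) ℂ,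
        (Matrix.of fun (p q : Fin m × Θ) => Mb p.2 q.2 p.1 q.1) = Cᴴ * C := by
      open scoped MatrixOrder in
      exact CStarAlgebra.nonneg_iff_eq_star_mul_self.mp hPSD.nonneg
    set A : Fin m × Θ → Matrix (Fin m) Θ ℂ :=
      fun r => Matrix.of fun p θ => star (C r (p, θ)) with hAdef
    have hMb : ∀ θ θ', Mb θ θ' =
        ∑ r, Matrix.vecMulVec (fun p => A r p θ) (fun q => star (A r q θ')) := by
      intro θ θ'
      ext p q
      have h := congrFun (congrFun (congrArg (fun (X : Matrix (Fin m × Θ) (Fin m × Θ) ℂ)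
        => X) hC) (p, θ)) (q, θ')
      simp only [Matrix.of_apply, Matrix.mul_apply, Matrix.conjTranspose_apply] at h
      simp only [Matrix.sum_apply, Matrix.vecMulVec_apply, hAdef, Matrix.of_apply, star_star]
      exact h
    set Λ : Matrix (Fin n) (Fin n) ℂ →ₗ[ℂ] Matrix (Fin m) (Fin m) ℂ :=
      { toFun := fun X => ∑ θ, ∑ θ', (V * X * Vᴴ) θ θ' • Mb θ θ'
        map_add' := fun X Y => by
          simp [Matrix.mul_add, Matrix.add_mul, Matrix.add_apply, add_smul,
            Finset.sum_add_distrib]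
        map_smul' := fun c X => by
          simp [Matrix.mul_smul, Matrix.smul_mul, Matrix.smul_apply, smul_smul,
            Finset.smul_sum] } with hΛdef
    have hΛapp : ∀ X, Λ X = ∑ θ, ∑ θ', (V * X * Vᴴ) θ θ' • Mb θ θ' := fun X => rfl
    refine ⟨Λ, ?_, ?_, ?_⟩
    · refine ⟨Fintype.card (Fin m × Θ),
        fun j => A ((Fintype.equivFin (Fin m × Θ)).symm j) * V, fun X => ?_⟩
      rw [hΛapp]
      have step1 : ∑ θ, ∑ θ', (V * X * Vᴴ) θ θ' • Mb θ θ'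
          = ∑ r, A r * (V * X * Vᴴ) * (A r)ᴴ := by
        calc ∑ θ, ∑ θ', (V * X * Vᴴ) θ θ' • Mb θ θ'
            = ∑ θ, ∑ θ', ∑ r, (V * X * Vᴴ) θ θ' •
                Matrix.vecMulVec (fun p => A r p θ) (fun q => star (A r q θ')) := by
              refine Finset.sum_congr rfl fun θ _ => Finset.sum_congr rfl fun θ' _ => ?_
              rw [hMb θ θ', Finset.smul_sum]
          _ = ∑ θ, ∑ r, ∑ θ', (V * X * Vᴴ) θ θ' •
                Matrix.vecMulVec (fun p => A r p θ) (fun q => star (A r q θ')) := by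
              exact Finset.sum_congr rfl fun θ _ => Finset.sum_comm
          _ = ∑ r, ∑ θ, ∑ θ', (V * X * Vᴴ) θ θ' •
                Matrix.vecMulVec (fun p => A r p θ) (fun q => star (A r q θ')) :=
              Finset.sum_comm
          _ = ∑ r, A r * (V * X * Vᴴ) * (A r)ᴴ :=
              Finset.sum_congr rfl fun r _ => aux_keySum (A r) (A r) (V * X * Vᴴ)
      rw [step1]
      simp only [show ∀ r, A r * (V * X * Vᴴ) * (A r)ᴴ = (A r * V) * X * (A r * V)ᴴ from
        fun r => by simp only [Matrix.conjTranspose_mul, Matrix.mul_assoc]]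
      exact Fintype.sum_equiv (Fintype.equivFin (Fin m × Θ)) _ _ (fun r => by simp)
    · show Λ 1 = 1
      rw [hΛapp, Matrix.mul_one, ← hGinv]
      exact hsum
    · intro θ0
      rw [hΛapp]
      have h1 : V * outer (u θ0) * Vᴴ
          = Matrix.vecMulVec (Pi.single θ0 1) (star (Pi.single θ0 (1 : ℂ))) := by
        rw [show outer (u θ0) = Matrix.vecMulVec (u θ0) (star (u θ0)) from rfl,
          aux_sandwich V (u θ0) (u θ0), hsingle θ0]
      rw [h1, ← hdiag θ0]
      simp only [Matrix.vecMulVec_apply, Pi.star_apply, Pi.single_apply, apply_ite (star : ℂ → ℂ),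
        star_one, star_zero, ite_mul, mul_ite, one_mul, mul_one, mul_zero, zero_mul,
        ite_smul, one_smul, zero_smul]
      rw [Finset.sum_congr rfl fun θ _ => Finset.sum_ite_eq' Finset.univ θ0 _]
      simp
end
end

section
/- Let {u_θ}_{θ∈Θ}, {v_θ}_{θ∈Θ} be linearly independent families spanning H and K (so |Θ| = dim H = dim K), with matrices [U] = Σ_θ |u_θ⟩⟨e_θ| and [V] = Σ_θ |v_θ⟩⟨f_θ| for orthonormal bases {e_θ}, {f_θ}. A completely positive map Λ with Kraus operators W_i satisfies W_i u_θ = α_{θ,i} v_θ for all θ, i if and only if W_i = [V] · diag(α_{1,i},…,α_{|Θ|,i}) · [U]^{-1}; and for such Λ, Σ_i W_i W_i† = [V] (H ∘ G_U^{-1}) [V]† where H_{θθ'} := Σ_i α_{θ,i} \overline{α_{θ',i}}. -/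
open Matrix Finset
open scoped ComplexOrder

noncomputable section

theorem stmt17 {N k : ℕ}
    (u v : Fin N → (Fin N → ℂ))
    (hu : LinearIndependent ℂ u) (hv : LinearIndependent ℂ v)
    (W : Fin k → Matrix (Fin N) (Fin N) ℂ) (α : Fin N → Fin k → ℂ) :
    ((∀ i θ, (W i).mulVec (u θ) = α θ i • v θ) ↔
      (∀ i, W i =
        (Matrix.of fun x θ => v θ x) * Matrix.diagonal (fun θ => α θ i) *
          (Matrix.of fun x θ => u θ x)⁻¹)) ∧
    ((∀ i θ, (W i).mulVec (u θ) = α θ i • v θ) →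
      ∑ i, W i * (W i)ᴴ =
        (Matrix.of fun x θ => v θ x) *
          Matrix.hadamard (Matrix.of fun θ θ' => ∑ i, α θ i * star (α θ' i)) (gram u)⁻¹ *
          (Matrix.of fun x θ => v θ x)ᴴ) := by
  set U : Matrix (Fin N) (Fin N) ℂ := Matrix.of fun x θ => u θ x with hU
  set V : Matrix (Fin N) (Fin N) ℂ := Matrix.of fun x θ => v θ x with hV
  have hUunit : IsUnit U := by
    rw [← Matrix.linearIndependent_cols_iff_isUnit]
    convert hu using 1 <;> rfl
  have hUinv : U * U⁻¹ = 1 := Matrix.mul_nonsing_inv U (Matrix.isUnit_iff_isUnit_det U |>.mp hUunit)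
  have hUinv' : U⁻¹ * U = 1 := Matrix.nonsing_inv_mul U (Matrix.isUnit_iff_isUnit_det U |>.mp hUunit)
  -- key: W * U has columns W.mulVec (u θ)
  have hcol : ∀ (M : Matrix (Fin N) (Fin N) ℂ) (θ x : Fin N),
      (M * U) x θ = M.mulVec (u θ) x := by
    intro M θ x
    simp [Matrix.mul_apply, Matrix.mulVec, dotProduct, hU]
  have hiff : ∀ i, ((∀ θ, (W i).mulVec (u θ) = α θ i • v θ) ↔
      W i = V * Matrix.diagonal (fun θ => α θ i) * U⁻¹) := by
    intro i
    constructor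
    · intro h
      have hWU : W i * U = V * Matrix.diagonal (fun θ => α θ i) := by
        ext x θ
        rw [hcol, h θ]
        simp [hV, Matrix.mul_diagonal, mul_comm]
      calc W i = W i * U * U⁻¹ := by rw [Matrix.mul_assoc, hUinv, Matrix.mul_one]
        _ = V * Matrix.diagonal (fun θ => α θ i) * U⁻¹ := by rw [hWU]
    · intro h θ
      have hWU : W i * U = V * Matrix.diagonal (fun θ => α θ i) := by
        rw [h, Matrix.mul_assoc, Matrix.mul_assoc, hUinv', Matrix.mul_one]
      ext x
      rw [← hcol, hWU]
      simp [hV, Matrix.mul_diagonal, mul_comm]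
  constructor
  · exact ⟨fun h i => (hiff i).1 (h i), fun h i => (hiff i).2 (h i)⟩
  · intro h
    have hW : ∀ i, W i = V * Matrix.diagonal (fun θ => α θ i) * U⁻¹ :=
      fun i => (hiff i).1 (h i)
    have hgram : gram u = Uᴴ * U := by
      ext θ θ'
      simp [_root_.gram, Matrix.mul_apply, dotProduct, hU, Matrix.conjTranspose_apply]
    have hgraminv : (gram u)⁻¹ = U⁻¹ * (U⁻¹)ᴴ := by
      rw [hgram, Matrix.mul_inv_rev, Matrix.conjTranspose_nonsing_inv]
    calc ∑ i, W i * (W i)ᴴ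
        = ∑ i, V * (Matrix.diagonal (fun θ => α θ i) * (U⁻¹ * (U⁻¹)ᴴ) *
            (Matrix.diagonal (fun θ => α θ i))ᴴ) * Vᴴ := by
          refine Finset.sum_congr rfl fun i _ => ?_
          rw [hW i]
          simp only [Matrix.conjTranspose_mul, Matrix.mul_assoc]
      _ = V * (∑ i, Matrix.diagonal (fun θ => α θ i) * (U⁻¹ * (U⁻¹)ᴴ) *
            (Matrix.diagonal (fun θ => α θ i))ᴴ) * Vᴴ := by
          rw [Finset.mul_sum, Finset.sum_mul]
      _ = V * Matrix.hadamard
            (Matrix.of fun θ θ' => ∑ i, α θ i * star (α θ' i)) (gram u)⁻¹ * Vᴴ := by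
          congr 2
          rw [hgraminv]
          ext θ θ'
          simp only [Matrix.diagonal_conjTranspose, Matrix.sum_apply,
            Matrix.mul_diagonal, Matrix.diagonal_mul, Matrix.hadamard_apply,
            Matrix.of_apply, Pi.star_apply, Finset.sum_mul]
          exact Finset.sum_congr rfl fun i _ => by ring
end
end

section
/- Let {u_θ}_{θ∈Θ} be a linearly independent family spanning H with Gram matrix G_U, and {M_θ} positive semidefinite operators on K. If ‖Σ_θ (G_U^{-1})_{θ,θ} M_θ‖ ≤ 1, then there exists a completely positive subunital map Λ : L(H) → L(K) with Λ(|u_θ⟩⟨u_θ|) = M_θ for all θ. -/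
open Matrix Finset
open scoped ComplexOrder

noncomputable section

/-- Auxiliary: conjugation of `X` by a rank-one matrix. -/
lemma aux1 {p q : ℕ} (c : Fin p → ℂ) (w : Fin q → ℂ) (X : Matrix (Fin q) (Fin q) ℂ) :
    vecMulVec c (star w) * X * (vecMulVec c (star w))ᴴ
      = (star w ⬝ᵥ X *ᵥ w) • vecMulVec c (star c) := by
  ext i j
  simp only [mul_apply, vecMulVec_apply, conjTranspose_apply, Matrix.smul_apply, dotProduct, mulVec,
    Pi.star_apply, smul_eq_mul, star_mul', star_star, Finset.mul_sum, Finset.sum_mul]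
  rw [Finset.sum_comm]
  apply Finset.sum_congr rfl; intro b _
  apply Finset.sum_congr rfl; intro a _
  ring

/-- Auxiliary: a matrix times its adjoint as a sum of rank-one matrices of its columns. -/
lemma aux2 {p : ℕ} (B : Matrix (Fin p) (Fin p) ℂ) :
    ∑ j, vecMulVec (fun i => B i j) (star fun i => B i j) = B * Bᴴ := by
  ext i i'
  simp [Matrix.sum_apply, mul_apply, vecMulVec_apply, conjTranspose_apply]

/-- Auxiliary: psd matrix of operator norm at most one is dominated by the identity. -/
lemma aux3 {m : ℕ} {A : Matrix (Fin m) (Fin m) ℂ} (hA : A.PosSemidef)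
    (h : ‖Matrix.toEuclideanCLM (𝕜 := ℂ) A‖ ≤ 1) :
    ((1 : Matrix (Fin m) (Fin m) ℂ) - A).PosSemidef := by
  refine posSemidef_iff_dotProduct_mulVec.mpr ⟨?_, ?_⟩
  · exact Matrix.isHermitian_one.sub hA.1
  intro x
  rw [sub_mulVec, one_mulVec, dotProduct_sub, sub_nonneg]
  set y : EuclideanSpace ℂ (Fin m) := (WithLp.equiv 2 _).symm x with hy
  have h1 : star x ⬝ᵥ A *ᵥ x = inner ℂ y (Matrix.toEuclideanCLM (𝕜 := ℂ) A y) := by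
    rw [EuclideanSpace.inner_eq_star_dotProduct, dotProduct_comm]; rfl
  have h2 : star x ⬝ᵥ x = (inner ℂ y y : ℂ) := by
    rw [EuclideanSpace.inner_eq_star_dotProduct, dotProduct_comm]; rfl
  have hr := hA.dotProduct_mulVec_nonneg x
  have him0 : (star x ⬝ᵥ A *ᵥ x).im = 0 := ((Complex.nonneg_iff.mp hr).2).symm
  have hz : star x ⬝ᵥ A *ᵥ x = ((star x ⬝ᵥ A *ᵥ x).re : ℂ) := by
    apply Complex.ext <;> simp [him0]
  have hre : (star x ⬝ᵥ A *ᵥ x).re ≤ ‖y‖ ^ 2 := by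
    rw [h1]
    calc (inner ℂ y (Matrix.toEuclideanCLM (𝕜 := ℂ) A y) : ℂ).re
        ≤ ‖(inner ℂ y (Matrix.toEuclideanCLM (𝕜 := ℂ) A y) : ℂ)‖ := Complex.re_le_norm _
      _ ≤ ‖y‖ * ‖Matrix.toEuclideanCLM (𝕜 := ℂ) A y‖ := norm_inner_le_norm _ _
      _ ≤ ‖y‖ * (‖Matrix.toEuclideanCLM (𝕜 := ℂ) A‖ * ‖y‖) := by
          gcongr; exact (Matrix.toEuclideanCLM (𝕜 := ℂ) A).le_opNorm y
      _ ≤ ‖y‖ * (1 * ‖y‖) := by gcongr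
      _ = ‖y‖ ^ 2 := by ring
  rw [hz, h2, inner_self_eq_norm_sq_to_K]
  norm_cast

/-- Auxiliary: `mulVec` commutes with finite sums of matrices. -/
lemma aux4 {k : Type*} [Fintype k] {p : ℕ} (f : k → Matrix (Fin p) (Fin p) ℂ)
    (x : Fin p → ℂ) : (∑ i, f i) *ᵥ x = ∑ i, f i *ᵥ x := by
  ext j
  simp only [mulVec, dotProduct, Matrix.sum_apply, Finset.sum_apply, Finset.sum_mul]
  exact Finset.sum_comm

/-- Auxiliary: dot product commutes with finite sums. -/
lemma aux5 {k : Type*} [Fintype k] {p : ℕ} (x : Fin p → ℂ) (w : k → Fin p → ℂ) :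
    x ⬝ᵥ (∑ i, w i) = ∑ i, x ⬝ᵥ w i := by
  simp only [dotProduct, Finset.sum_apply, Finset.mul_sum]
  exact Finset.sum_comm

theorem stmt18 {Θ : Type*} [Fintype Θ] [DecidableEq Θ] {n m : ℕ}
    (u : Θ → (Fin n → ℂ))
    (hu : LinearIndependent ℂ u)
    (hus : Submodule.span ℂ (Set.range u) = ⊤)
    (M : Θ → Matrix (Fin m) (Fin m) ℂ) (hM : ∀ θ, (M θ).PosSemidef)
    (hnorm : opNorm (∑ θ, ((gram u)⁻¹ θ θ) • M θ) ≤ 1) :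
    ∃ Λ : Matrix (Fin n) (Fin n) ℂ →ₗ[ℂ] Matrix (Fin m) (Fin m) ℂ,
      IsCPMap Λ ∧ IsSubunital Λ ∧ ∀ θ, Λ (outer (u θ)) = M θ := by
  classical
  have hus' : ⊤ ≤ Submodule.span ℂ (Set.range u) := hus.ge
  set b : Module.Basis Θ ℂ (Fin n → ℂ) := Module.Basis.mk hu hus' with hb
  set v : Θ → Fin n → ℂ := fun θ j => star (b.repr (Pi.single j 1) θ) with hvdef
  have hv : ∀ (θ : Θ) (x : Fin n → ℂ), star (v θ) ⬝ᵥ x = b.repr x θ := by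
    intro θ x
    have hx : x = ∑ j, x j • (Pi.single j 1 : Fin n → ℂ) := by
      ext k; simp [Pi.single_apply]
    calc star (v θ) ⬝ᵥ x = ∑ j, b.repr (Pi.single j 1) θ * x j := by
          simp [dotProduct, hvdef]
      _ = b.repr x θ := by
          conv_rhs => rw [hx]
          rw [map_sum]
          simp [Finsupp.sum_apply', mul_comm]
  have hδ : ∀ θ θ', star (v θ) ⬝ᵥ u θ' = if θ' = θ then 1 else 0 := by
    intro θ θ'
    rw [hv]
    have : u θ' = b θ' := (Module.Basis.mk_apply hu hus' θ').symm
    rw [this, b.repr_self]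
    simp [Finsupp.single_apply]
  have hgram : gram u * gram v = 1 := by
    ext θ θ''
    have hsum : ∑ θ', (b.repr (v θ'') θ') • u θ' = v θ'' := by
      have := b.sum_repr (v θ'')
      have hu' : ∀ θ', b θ' = u θ' := fun θ' => Module.Basis.mk_apply hu hus' θ'
      simpa only [hu'] using this
    calc (gram u * gram v) θ θ''
        = ∑ θ', (star (u θ) ⬝ᵥ u θ') * (b.repr (v θ'') θ') := by
          simp [mul_apply, _root_.gram, hv]
      _ = star (u θ) ⬝ᵥ (∑ θ', (b.repr (v θ'') θ') • u θ') := by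
          simp only [dotProduct, Finset.sum_apply, Pi.smul_apply, smul_eq_mul, Finset.mul_sum]
          rw [Finset.sum_comm]
          exact Finset.sum_congr rfl fun θ' _ => by
            rw [Finset.sum_mul]; exact Finset.sum_congr rfl fun j _ => by ring
      _ = star (u θ) ⬝ᵥ v θ'' := by rw [hsum]
      _ = (1 : Matrix Θ Θ ℂ) θ θ'' := by
          rw [star_dotProduct, hδ θ'' θ]
          simp [Matrix.one_apply, apply_ite]
  have hginv : (gram u)⁻¹ = gram v := inv_eq_right_inv hgram
  -- the CP map
  refine ⟨{ toFun := fun X => ∑ θ, (star (v θ) ⬝ᵥ X *ᵥ v θ) • M θ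
            map_add' := fun X Y => by
              simp [add_mulVec, dotProduct_add, add_smul, Finset.sum_add_distrib]
            map_smul' := fun c X => by
              simp [smul_mulVec, smul_smul, Finset.smul_sum] }, ?_, ?_, ?_⟩
  · -- CP
    set e : Fin (Fintype.card (Θ × Fin m)) ≃ Θ × Fin m := (Fintype.equivFin (Θ × Fin m)).symm
      with he
    set F : Θ × Fin m → Matrix (Fin m) (Fin n) ℂ := fun p =>
      vecMulVec (fun r => (open scoped MatrixOrder in CFC.sqrt (M p.1)) r p.2) (star (v p.1)) with hF
    refine ⟨Fintype.card (Θ × Fin m), fun i => F (e i), fun X => ?_⟩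
    simp only [LinearMap.coe_mk, AddHom.coe_mk]
    calc ∑ θ, (star (v θ) ⬝ᵥ X *ᵥ v θ) • M θ
        = ∑ p : Θ × Fin m, F p * X * (F p)ᴴ := by
          rw [Fintype.sum_prod_type]
          refine Finset.sum_congr rfl fun θ _ => ?_
          simp only [hF, aux1]
          open scoped MatrixOrder in rw [← Finset.smul_sum, aux2, (CFC.sqrt_nonneg (M θ)).posSemidef.1, CFC.sqrt_mul_sqrt_self (M θ) (hM θ).nonneg]
      _ = ∑ i, F (e i) * X * (F (e i))ᴴ :=
          (Equiv.sum_comp e (fun p => F p * X * (F p)ᴴ)).symm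
  · -- subunital
    have hΛ1 : (∑ θ, (star (v θ) ⬝ᵥ (1 : Matrix (Fin n) (Fin n) ℂ) *ᵥ v θ) • M θ)
        = ∑ θ, ((gram u)⁻¹ θ θ) • M θ := by
      rw [hginv]
      exact Finset.sum_congr rfl fun θ _ => by rw [one_mulVec]; rfl
    show ((1 : Matrix (Fin m) (Fin m) ℂ)
      - ∑ θ, (star (v θ) ⬝ᵥ (1 : Matrix (Fin n) (Fin n) ℂ) *ᵥ v θ) • M θ).PosSemidef
    rw [hΛ1]
    refine aux3 ?_ hnorm
    refine posSemidef_iff_dotProduct_mulVec.mpr ⟨?_, ?_⟩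
    · show (∑ θ, ((gram u)⁻¹ θ θ) • M θ)ᴴ = _
      rw [conjTranspose_sum]
      refine Finset.sum_congr rfl fun θ _ => ?_
      rw [conjTranspose_smul, (hM θ).1]
      congr 1
      rw [hginv]
      show star (star (v θ) ⬝ᵥ v θ) = star (v θ) ⬝ᵥ v θ
      rw [← star_dotProduct]
    · intro x
      rw [aux4, aux5]
      refine Finset.sum_nonneg fun θ _ => ?_
      rw [smul_mulVec, dotProduct_smul, smul_eq_mul]
      refine mul_nonneg ?_ ((hM θ).dotProduct_mulVec_nonneg x)
      rw [hginv]
      exact dotProduct_star_self_nonneg (v θ)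
  · -- values on outer projections
    intro θ
    have hov : ∀ θ', star (v θ') ⬝ᵥ (outer (u θ)) *ᵥ v θ' = if θ = θ' then 1 else 0 := by
      intro θ'
      have hm : (outer (u θ)) *ᵥ v θ' = (star (u θ) ⬝ᵥ v θ') • u θ := by
        ext i
        simp only [outer, mulVec, vecMulVec_apply, dotProduct, Pi.smul_apply, Pi.star_apply,
          smul_eq_mul, Finset.sum_mul]
        exact Finset.sum_congr rfl fun j _ => by ring
      rw [hm, dotProduct_smul, star_dotProduct (u θ) (v θ'), hδ θ' θ, smul_eq_mul]
      split_ifs <;> simp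
    simp only [LinearMap.coe_mk, AddHom.coe_mk, hov, ite_smul, zero_smul, one_smul]
    simp
end
end
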